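/- Let m, n, p, q ≥ 2 be integers with m ≤ p and n ≤ q, let D be an EAS division ring, and let φ : M_{m×n}(D) → M_{p×q}(D) be an adjacency preserver that is not degenerate with respect to 0. For M ∈ M_{m×n}(D), write M̃ := [[M, 0],[0, 0]] ∈ M_{p×q}(D). Assume that φ(M) = M̃ for all M ∈ R(e₁) ∪ L(ᵗf₁), where e₁ ∈ D^n is the first standard basis row vector and ᵗf₁ ∈ ᵗD^m is the first standard basis column vector. Then φ(M) = M̃ for all M ∈ M_{m×n}(D). -/

import Mathlib

set_option maxHeartbeats 1000000


open Matrix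

variable {D : Type*} [DivisionRing D]

/-- The rank of a matrix over a division ring: the dimension of its row space,
i.e. of the left `D`-subspace of `D^n` spanned by the rows. -/
noncomputable def rowRank {m n : ℕ} (A : Matrix (Fin m) (Fin n) D) : ℕ :=
  Module.finrank D (Submodule.span D (Set.range fun i => A i))

/-- Two matrices are adjacent if their difference has rank one. -/
def Adjacent {m n : ℕ} (A B : Matrix (Fin m) (Fin n) D) : Prop :=
  rowRank (A - B) = 1

/-- `R(x)`: the set of matrices of the form `ᵗu x` for a fixed row vector `x`. -/
def Rvec {m n : ℕ} (x : Fin n → D) : Set (Matrix (Fin m) (Fin n) D) :=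
  { M | ∃ u : Fin m → D, ∀ i j, M i j = u i * x j }

/-- `L(ᵗy)`: the set of matrices of the form `ᵗy v` for a fixed column vector `ᵗy`. -/
def Lvec {m n : ℕ} (y : Fin m → D) : Set (Matrix (Fin m) (Fin n) D) :=
  { M | ∃ v : Fin n → D, ∀ i j, M i j = y i * v j }

/-- `R_d`: the matrices whose row space is contained in `d`. -/
def Rsub {m n : ℕ} (d : Submodule D (Fin n → D)) : Set (Matrix (Fin m) (Fin n) D) :=
  { M | ∀ i, M i ∈ d }

/-- `L_e`: the matrices whose column space (a right subspace, i.e. a `Dᵐᵒᵖ`-submodule)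
is contained in `e`. -/
def Lsub {m n : ℕ} (e : Submodule Dᵐᵒᵖ (Fin m → D)) : Set (Matrix (Fin m) (Fin n) D) :=
  { M | ∀ j, (fun i => M i j) ∈ e }

/-- The orthogonal set of a set `e` of column vectors. -/
def perpSet {m : ℕ} (e : Set (Fin m → D)) : Set (Fin m → D) :=
  { u | ∀ v ∈ e, ∑ i, u i * v i = 0 }

/-- The `p × q` matrix with upper-left block `B` and zeros elsewhere. -/
def pad {m n : ℕ} (p q : ℕ) (B : Matrix (Fin m) (Fin n) D) :
    Matrix (Fin p) (Fin q) D :=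
  Matrix.of fun i j =>
    if hi : (i : ℕ) < m then if hj : (j : ℕ) < n then B ⟨i, hi⟩ ⟨j, hj⟩ else 0 else 0

/-- `φ` is degenerate with respect to `A`. -/
def DegenerateAt {m n p q : ℕ} (φ : Matrix (Fin m) (Fin n) D → Matrix (Fin p) (Fin q) D)
    (A : Matrix (Fin m) (Fin n) D) : Prop :=
  ∃ x : Fin p → D, x ≠ 0 ∧ ∃ y : Fin q → D, y ≠ 0 ∧
    ∀ M : Matrix (Fin m) (Fin n) D, rowRank M ≤ 1 →
      φ (A + M) - φ A ∈ Rvec y ∪ Lvec x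

/-- `φ` is degenerate: degenerate with respect to every matrix. -/
def Degenerate {m n p q : ℕ} (φ : Matrix (Fin m) (Fin n) D → Matrix (Fin p) (Fin q) D) :
    Prop :=
  ∀ A, DegenerateAt φ A

/-- A map (sending `0` to `0`) is degenerate with respect to `0` iff it maps every matrix of
rank at most one into `R(y) ∪ L(ᵗx)` for some nonzero `y`, `x`. -/
def DegZero {m n p q : ℕ} (φ : Matrix (Fin m) (Fin n) D → Matrix (Fin p) (Fin q) D) :
    Prop :=
  ∃ x : Fin p → D, x ≠ 0 ∧ ∃ y : Fin q → D, y ≠ 0 ∧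
    ∀ M : Matrix (Fin m) (Fin n) D, rowRank M ≤ 1 → φ M ∈ Rvec y ∪ Lvec x

/-- A standard adjacency preserver. -/
def Standard {m n p q : ℕ} (φ : Matrix (Fin m) (Fin n) D → Matrix (Fin p) (Fin q) D) :
    Prop :=
  (m ≤ p ∧ n ≤ q ∧ ∃ τ : D ≃+* D, ∃ T : Matrix (Fin p) (Fin p) D,
    ∃ S : Matrix (Fin q) (Fin q) D, ∃ R : Matrix (Fin p) (Fin q) D,
    IsUnit T ∧ IsUnit S ∧ ∀ A, φ A = T * pad p q (A.map τ) * S + R) ∨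
  (n ≤ p ∧ m ≤ q ∧ ∃ σ : D → D, Function.Bijective σ ∧ σ 1 = 1 ∧
    (∀ a b, σ (a + b) = σ a + σ b) ∧ (∀ a b, σ (a * b) = σ b * σ a) ∧
    ∃ T : Matrix (Fin p) (Fin p) D, ∃ S : Matrix (Fin q) (Fin q) D,
    ∃ R : Matrix (Fin p) (Fin q) D, IsUnit T ∧ IsUnit S ∧
    ∀ A, φ A = T * pad p q (A.map σ).transpose * S + R)

/-- A division ring is EAS if every (unital) ring endomorphism of it is surjective. -/
def EAS (D : Type*) [DivisionRing D] : Prop :=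
  ∀ f : D →+* D, Function.Surjective f

/-- A set of matrices is adjacent if any two distinct members are adjacent. -/
def IsAdjacentSet {m n : ℕ} (S : Set (Matrix (Fin m) (Fin n) D)) : Prop :=
  ∀ A ∈ S, ∀ B ∈ S, A ≠ B → Adjacent A B

namespace S13


/-- rank-one building block: `ro u v = ᵗu v`. -/
def ro {m n : ℕ} (u : Fin m → D) (v : Fin n → D) : Matrix (Fin m) (Fin n) D :=
  Matrix.of fun i j => u i * v j

/-- right scalar multiple of a column vector -/
def rs {m : ℕ} (u : Fin m → D) (c : D) : Fin m → D := fun i => u i * c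

/-- right parallel (columns) -/
def RPar {m : ℕ} (u w : Fin m → D) : Prop := (∃ c, u = rs w c) ∨ (∃ c, w = rs u c)

/-- left parallel (rows) -/
def LPar {n : ℕ} (v x : Fin n → D) : Prop := (∃ c : D, v = c • x) ∨ (∃ c : D, x = c • v)

/-- right linear independence of a family of columns -/
def RIndep {s m : ℕ} (a : Fin s → Fin m → D) : Prop :=
  ∀ c : Fin s → D, (∀ i, ∑ k, a k i * c k = 0) → c = 0

@[simp] lemma ro_apply {m n : ℕ} (u : Fin m → D) (v : Fin n → D) (i j) :
    ro u v i j = u i * v j := rfl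

@[simp] lemma rs_apply {m : ℕ} (u : Fin m → D) (c : D) (i) : rs u c i = u i * c := rfl

lemma ro_row {m n : ℕ} (u : Fin m → D) (v : Fin n → D) (i) :
    ro u v i = u i • v := by
  funext j; simp [ro, Pi.smul_apply, smul_eq_mul]

lemma ro_zero_left {m n : ℕ} (v : Fin n → D) : ro (0 : Fin m → D) v = 0 := by
  ext i j; simp [ro]

lemma ro_zero_right {m n : ℕ} (u : Fin m → D) : ro u (0 : Fin n → D) = 0 := by
  ext i j; simp [ro]

lemma ro_ne_zero {m n : ℕ} {u : Fin m → D} {v : Fin n → D} (hu : u ≠ 0) (hv : v ≠ 0) :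
    ro u v ≠ 0 := by
  obtain ⟨i, hi⟩ := Function.ne_iff.mp hu
  obtain ⟨j, hj⟩ := Function.ne_iff.mp hv
  intro hz
  have : u i * v j = 0 := by
    have := congrFun (congrFun hz i) j; simpa [ro] using this
  rcases mul_eq_zero.mp this with h | h
  · exact hi h
  · exact hj h

lemma ro_rs {m n : ℕ} (u : Fin m → D) (c : D) (v : Fin n → D) :
    ro (rs u c) v = ro u (c • v) := by
  ext i j; simp [ro, rs, mul_assoc]

lemma ro_add_right {m n : ℕ} (u : Fin m → D) (v w : Fin n → D) :
    ro u (v + w) = ro u v + ro u w := by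
  ext i j; simp [ro, mul_add]

lemma ro_add_left {m n : ℕ} (u w : Fin m → D) (v : Fin n → D) :
    ro (u + w) v = ro u v + ro w v := by
  ext i j; simp [ro, add_mul]

lemma ro_sub_right {m n : ℕ} (u : Fin m → D) (v w : Fin n → D) :
    ro u (v - w) = ro u v - ro u w := by
  ext i j; simp [ro, mul_sub]

lemma ro_sub_left {m n : ℕ} (u w : Fin m → D) (v : Fin n → D) :
    ro (u - w) v = ro u v - ro w v := by
  ext i j; simp [ro, sub_mul]

lemma ro_neg_right {m n : ℕ} (u : Fin m → D) (v : Fin n → D) :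
    ro u (-v) = - ro u v := by
  ext i j; simp [ro]

/-- if `ro u v = ro u' v'` is nonzero then the column vectors are right-parallel -/
lemma ro_eq_ro_rpar {m n : ℕ} {u u' : Fin m → D} {v v' : Fin n → D}
    (h : ro u v = ro u' v') (hne : ro u v ≠ 0) : RPar u u' := by
  have hv : v ≠ 0 := by rintro rfl; exact hne (ro_zero_right u)
  obtain ⟨j, hj⟩ := Function.ne_iff.mp hv
  left
  refine ⟨v' j * (v j)⁻¹, ?_⟩
  funext i
  have hij := congrFun (congrFun h i) j
  simp only [ro_apply] at hij
  simp only [rs_apply]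
  have hj' : v j ≠ 0 := by simpa using hj
  rw [← mul_assoc, ← hij, mul_assoc, mul_inv_cancel₀ hj', mul_one]





noncomputable def rosum {s m n : ℕ} (a : Fin s → Fin m → D) (x : Fin s → Fin n → D) :
    Matrix (Fin m) (Fin n) D := ∑ k, ro (a k) (x k)

lemma rosum_apply {s m n : ℕ} (a : Fin s → Fin m → D) (x : Fin s → Fin n → D) (i j) :
    rosum a x i j = ∑ k, a k i * x k j := by
  simp [rosum, Matrix.sum_apply, ro]

lemma rosum_row {s m n : ℕ} (a : Fin s → Fin m → D) (x : Fin s → Fin n → D) (i) :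
    rosum a x i = ∑ k, a k i • x k := by
  funext j
  simp [rosum_apply, Finset.sum_apply, Pi.smul_apply, smul_eq_mul]

/-- a linear functional vanishing on a submodule avoiding `v` -/
lemma exists_dual {s : ℕ} (p : Submodule D (Fin s → D)) {v : Fin s → D} (hv : v ∉ p) :
    ∃ g : (Fin s → D) →ₗ[D] D, (∀ y ∈ p, g y = 0) ∧ g v ≠ 0 := by
  classical
  have hπv : p.mkQ v ≠ 0 := by
    simpa [Submodule.Quotient.mk_eq_zero] using hv
  let b := Module.Basis.ofVectorSpace D ((Fin s → D) ⧸ p)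
  have hrepr : b.repr (p.mkQ v) ≠ 0 := by
    intro hz
    apply hπv
    have := congrArg b.repr.symm hz
    simpa using this
  obtain ⟨i, hi⟩ : ∃ i, b.repr (p.mkQ v) i ≠ 0 := by
    by_contra hc
    push_neg at hc
    exact hrepr (Finsupp.ext hc)
  refine ⟨(b.coord i).comp p.mkQ, ?_, ?_⟩
  · intro y hy
    have : p.mkQ y = 0 := by simpa [Submodule.Quotient.mk_eq_zero] using hy
    simp [this]
  · simpa [Module.Basis.coord_apply] using hi

/-- the "dual family" lemma: right-independent columns admit left dual functionals -/
lemma rindep_dual {s m : ℕ} {a : Fin s → Fin m → D} (ha : RIndep a) (l : Fin s) :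
    ∃ lam : Fin m → D, ∀ k, (∑ i, lam i * a k i) = if k = l then 1 else 0 := by
  classical
  let T : (Fin m → D) →ₗ[D] (Fin s → D) :=
    { toFun := fun lam => fun k => ∑ i, lam i * a k i
      map_add' := by
        intro x y; funext k; simp [add_mul, Finset.sum_add_distrib]
      map_smul' := by
        intro c x; funext k
        simp [Finset.mul_sum, smul_eq_mul, mul_assoc] }
  by_cases hmem : (Pi.single l 1 : Fin s → D) ∈ LinearMap.range T
  · obtain ⟨lam, hlam⟩ := hmem
    refine ⟨lam, fun k => ?_⟩
    have := congrFun hlam k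
    simpa [T, Pi.single_apply] using this
  · obtain ⟨g, hg0, hgv⟩ := exists_dual (LinearMap.range T) hmem
    exfalso
    set d : Fin s → D := fun k => g (Pi.single k 1) with hd
    have hgx : ∀ x : Fin s → D, g x = ∑ k, x k * d k := by
      intro x
      have hx : x = ∑ k, x k • (Pi.single k (1 : D) : Fin s → D) := by
        funext k'; simp [Pi.single_apply, Finset.sum_apply]
      calc g x = g (∑ k, x k • (Pi.single k (1:D) : Fin s → D)) := by rw [← hx]
        _ = ∑ k, x k • g (Pi.single k (1:D)) := by rw [map_sum]; simp
        _ = ∑ k, x k * d k := by simp [hd, smul_eq_mul]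
    have hcol : ∀ i, ∑ k, a k i * d k = 0 := by
      intro i
      have hTi : T (Pi.single i 1) = fun k => a k i := by
        funext k; simp [T, Pi.single_apply]
      have := hg0 (T (Pi.single i 1)) (LinearMap.mem_range_self T _)
      rw [hgx] at this
      simpa [hTi] using this
    have : d = 0 := ha d hcol
    apply hgv
    have : d l = 0 := by rw [this]; rfl
    simpa [hd] using this

lemma span_rows_rosum {s m n : ℕ} {a : Fin s → Fin m → D} (ha : RIndep a)
    (x : Fin s → Fin n → D) :
    Submodule.span D (Set.range fun i => rosum a x i) = Submodule.span D (Set.range x) := by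
  apply le_antisymm
  · rw [Submodule.span_le]
    rintro _ ⟨i, rfl⟩
    show rosum a x i ∈ _
    rw [rosum_row]
    exact Submodule.sum_mem _ fun k _ =>
      Submodule.smul_mem _ _ (Submodule.subset_span (Set.mem_range_self k))
  · rw [Submodule.span_le]
    rintro _ ⟨l, rfl⟩
    obtain ⟨lam, hlam⟩ := rindep_dual ha l
    have hxl : x l = ∑ i, lam i • rosum a x i := by
      funext j
      have : ∑ i, lam i * rosum a x i j = ∑ i, ∑ k, lam i * (a k i * x k j) := by
        apply Finset.sum_congr rfl
        intro i _
        rw [rosum_apply, Finset.mul_sum]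
      rw [Finset.sum_apply]
      simp only [Pi.smul_apply, smul_eq_mul]
      rw [this, Finset.sum_comm]
      have : ∀ k, ∑ i, lam i * (a k i * x k j) = (∑ i, lam i * a k i) * x k j := by
        intro k
        rw [Finset.sum_mul]
        apply Finset.sum_congr rfl
        intro i _
        rw [mul_assoc]
      rw [Finset.sum_congr rfl fun k _ => this k]
      rw [Finset.sum_congr rfl fun k _ => by rw [hlam k]]
      simp
    rw [hxl]
    exact Submodule.sum_mem _ fun i _ =>
      Submodule.smul_mem _ _ (Submodule.subset_span (Set.mem_range_self i))

lemma rowRank_rosum {s m n : ℕ} {a : Fin s → Fin m → D} (ha : RIndep a)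
    (x : Fin s → Fin n → D) :
    rowRank (rosum a x) = Module.finrank D (Submodule.span D (Set.range x)) := by
  unfold rowRank
  rw [span_rows_rosum ha]








----------------------------------------------------------------
-- parallel / independence auxiliary lemmas
----------------------------------------------------------------

lemma rpar_zero_left {m : ℕ} (w : Fin m → D) : RPar 0 w :=
  Or.inl ⟨0, by funext i; simp [rs]⟩

lemma rpar_zero_right {m : ℕ} (u : Fin m → D) : RPar u 0 :=
  Or.inr ⟨0, by funext i; simp [rs]⟩

lemma lpar_zero_left {n : ℕ} (x : Fin n → D) : LPar 0 x := Or.inl ⟨0, by simp⟩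

lemma lpar_zero_right {n : ℕ} (v : Fin n → D) : LPar v 0 := Or.inr ⟨0, by simp⟩

lemma ne_zero_of_not_rpar_left {m : ℕ} {u w : Fin m → D} (h : ¬ RPar u w) : u ≠ 0 :=
  fun hu => h (hu ▸ rpar_zero_left w)

lemma ne_zero_of_not_rpar_right {m : ℕ} {u w : Fin m → D} (h : ¬ RPar u w) : w ≠ 0 :=
  fun hw => h (hw ▸ rpar_zero_right u)

lemma ne_zero_of_not_lpar_left {n : ℕ} {v x : Fin n → D} (h : ¬ LPar v x) : v ≠ 0 :=
  fun hv => h (hv ▸ lpar_zero_left x)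

lemma ne_zero_of_not_lpar_right {n : ℕ} {v x : Fin n → D} (h : ¬ LPar v x) : x ≠ 0 :=
  fun hx => h (hx ▸ lpar_zero_right v)

/-- canonical form of right parallelism with nonzero left entry -/
lemma rpar_iff {m : ℕ} {u w : Fin m → D} (hu : u ≠ 0) (h : RPar u w) :
    ∃ c : D, w = rs u c := by
  rcases h with ⟨c, hc⟩ | hc
  · by_cases hc0 : c = 0
    · exact absurd (by funext i; simp [hc, hc0, rs]) hu
    · refine ⟨c⁻¹, ?_⟩
      funext i
      have := congrFun hc i
      simp only [rs] at this ⊢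
      rw [this, mul_assoc, mul_inv_cancel₀ hc0, mul_one]
  · exact hc

lemma lpar_iff {n : ℕ} {v x : Fin n → D} (hv : v ≠ 0) (h : LPar v x) :
    ∃ c : D, x = c • v := by
  rcases h with ⟨c, hc⟩ | hc
  · by_cases hc0 : c = 0
    · exact absurd (by simp [hc, hc0]) hv
    · exact ⟨c⁻¹, by rw [hc, smul_smul, inv_mul_cancel₀ hc0, one_smul]⟩
  · exact hc

lemma rpar_trans {m : ℕ} {u w z : Fin m → D} (hu : u ≠ 0) (h1 : RPar w u) (h2 : RPar u z) :
    RPar w z := by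
  have hw := rpar_iff hu (Or.symm h1)
  have hz := rpar_iff hu h2
  obtain ⟨c, rfl⟩ := hw
  obtain ⟨c', rfl⟩ := hz
  by_cases hc : c = 0
  · subst hc; exact Or.inl ⟨0, by funext i; simp [rs]⟩
  · exact Or.inr ⟨c⁻¹ * c', by funext i; simp [rs, mul_assoc, hc]⟩

lemma lpar_trans {n : ℕ} {v x z : Fin n → D} (hv : v ≠ 0) (h1 : LPar x v) (h2 : LPar v z) :
    LPar x z := by
  obtain ⟨c, rfl⟩ := lpar_iff hv (Or.symm h1)
  obtain ⟨c', rfl⟩ := lpar_iff hv h2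
  by_cases hc : c = 0
  · subst hc; exact Or.inl ⟨0, by simp⟩
  · exact Or.inr ⟨c' * c⁻¹, by rw [smul_smul, mul_assoc, inv_mul_cancel₀ hc, mul_one]⟩

lemma rindep_pair {m : ℕ} {u w : Fin m → D} (h : ¬ RPar u w) : RIndep ![u, w] := by
  intro c hc
  have hu : u ≠ 0 := ne_zero_of_not_rpar_left h
  have hsum : ∀ i, u i * c 0 + w i * c 1 = 0 := by
    intro i
    have := hc i
    simpa [Fin.sum_univ_two] using this
  by_cases h1 : c 1 = 0
  · have h0 : c 0 = 0 := by
      obtain ⟨i, hi⟩ := Function.ne_iff.mp hu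
      have hi' : u i ≠ 0 := by simpa using hi
      have := hsum i
      rw [h1, mul_zero, add_zero] at this
      rcases mul_eq_zero.mp this with h | h
      · exact absurd h hi'
      · exact h
    funext k
    fin_cases k <;> simp [h0, h1]
  · exfalso
    apply h
    right
    refine ⟨-(c 0 * (c 1)⁻¹), ?_⟩
    funext i
    have := hsum i
    have hw : w i * c 1 = -(u i * c 0) := by linear_combination (norm := noncomm_ring) this
    simp only [rs]
    have : w i = -(u i * c 0) * (c 1)⁻¹ := by
      rw [← hw, mul_assoc, mul_inv_cancel₀ h1, mul_one]
    rw [this, neg_mul, mul_assoc, ← mul_neg]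

lemma lindep_pair {n : ℕ} {x y : Fin n → D} (h : ¬ LPar x y) : LinearIndependent D ![x, y] := by
  have hx : x ≠ 0 := ne_zero_of_not_lpar_left h
  have hy : y ≠ 0 := ne_zero_of_not_lpar_right h
  rw [Fintype.linearIndependent_iff]
  intro g hg
  have hsum : g 0 • x + g 1 • y = 0 := by simpa [Fin.sum_univ_two] using hg
  by_cases h0 : g 0 = 0
  · have : g 1 • y = 0 := by rw [h0, zero_smul, zero_add] at hsum; exact hsum
    have h1 : g 1 = 0 := by
      rcases smul_eq_zero.mp this with h' | h'
      · exact h'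
      · exact absurd h' hy
    intro i; fin_cases i <;> assumption
  · exfalso
    apply h
    left
    refine ⟨-((g 0)⁻¹ * g 1), ?_⟩
    have hx0 : g 0 • x = -(g 1 • y) := eq_neg_of_add_eq_zero_left hsum
    have hxx : x = (g 0)⁻¹ • (g 0 • x) := by rw [smul_smul, inv_mul_cancel₀ h0, one_smul]
    rw [hxx, hx0, smul_neg, smul_smul, ← neg_smul]

lemma lindep_coords {n : ℕ} {x y : Fin n → D} (h : LinearIndependent D ![x, y])
    {c1 c2 : D} (hc : c1 • x + c2 • y = 0) : c1 = 0 ∧ c2 = 0 := by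
  rw [Fintype.linearIndependent_iff] at h
  have := h ![c1, c2] (by simpa [Fin.sum_univ_two] using hc)
  exact ⟨this 0, this 1⟩


----------------------------------------------------------------
-- rank lemmas
----------------------------------------------------------------

lemma rindep_single {m : ℕ} {u : Fin m → D} (hu : u ≠ 0) : RIndep ![u] := by
  intro c hc
  obtain ⟨i, hi⟩ := Function.ne_iff.mp hu
  have hi' : u i ≠ 0 := by simpa using hi
  have h0 := hc i
  rw [Fin.sum_univ_one] at h0
  have h0' : u i * c 0 = 0 := by simpa only [Matrix.cons_val_zero] using h0
  have hc0 : c 0 = 0 := by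
    rcases mul_eq_zero.mp h0' with h | h
    · exact absurd h hi'
    · exact h
  funext k
  fin_cases k; simpa using hc0

lemma lindep_single {n : ℕ} {v : Fin n → D} (hv : v ≠ 0) : LinearIndependent D ![v] := by
  rw [Fintype.linearIndependent_iff]
  intro g hg i
  have : g 0 • v = 0 := by simpa [Fin.sum_univ_one] using hg
  have h0 : g 0 = 0 := by
    rcases smul_eq_zero.mp this with h | h
    · exact h
    · exact absurd h hv
  fin_cases i; exact h0

lemma rosum_one {m n : ℕ} (u : Fin m → D) (v : Fin n → D) : rosum ![u] ![v] = ro u v := by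
  unfold rosum
  rw [Fin.sum_univ_one]
  simp

lemma rosum_two {m n : ℕ} (u w : Fin m → D) (x y : Fin n → D) :
    rosum ![u, w] ![x, y] = ro u x + ro w y := by
  unfold rosum
  rw [Fin.sum_univ_two]
  simp

lemma rowRank_ro {m n : ℕ} {u : Fin m → D} {v : Fin n → D} (hu : u ≠ 0) (hv : v ≠ 0) :
    rowRank (ro u v) = 1 := by
  rw [← rosum_one, rowRank_rosum (rindep_single hu),
    finrank_span_eq_card (lindep_single hv)]
  simp

lemma rowRank_two {m n : ℕ} {u w : Fin m → D} {x y : Fin n → D}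
    (h : ¬ RPar u w) (h' : ¬ LPar x y) : rowRank (ro u x + ro w y) = 2 := by
  rw [← rosum_two, rowRank_rosum (rindep_pair h), finrank_span_eq_card (lindep_pair h')]
  simp

lemma par_of_rank_ne_two {m n : ℕ} {u w : Fin m → D} {x y : Fin n → D}
    (hr : rowRank (ro u x + ro w y) ≠ 2) : RPar u w ∨ LPar x y := by
  by_contra hcon
  push_neg at hcon
  exact hr (rowRank_two hcon.1 hcon.2)

lemma rowRank_zero {m n : ℕ} : rowRank (0 : Matrix (Fin m) (Fin n) D) = 0 := by
  unfold rowRank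
  have : Submodule.span D (Set.range fun i : Fin m => (0 : Matrix (Fin m) (Fin n) D) i) = ⊥ := by
    rw [Submodule.span_eq_bot]
    rintro _ ⟨i, rfl⟩
    rfl
  rw [this, finrank_bot]

lemma eq_zero_of_rowRank_eq_zero {m n : ℕ} {M : Matrix (Fin m) (Fin n) D}
    (h : rowRank M = 0) : M = 0 := by
  unfold rowRank at h
  rw [Submodule.finrank_eq_zero] at h
  ext i j
  have : M i ∈ (⊥ : Submodule D (Fin n → D)) := by
    rw [← h]
    exact Submodule.subset_span (Set.mem_range_self i)
  have h0 : M i = 0 := by simpa using this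
  have := congrFun h0 j
  simpa using this

lemma rowRank_neg {m n : ℕ} (M : Matrix (Fin m) (Fin n) D) : rowRank (-M) = rowRank M := by
  have hle : ∀ N : Matrix (Fin m) (Fin n) D,
      Submodule.span D (Set.range fun i => (-N) i) ≤
        Submodule.span D (Set.range fun i => N i) := by
    intro N
    rw [Submodule.span_le]
    rintro _ ⟨i, rfl⟩
    show (-N) i ∈ _
    have : (-N) i = (-1 : D) • N i := by
      funext j; simp
    rw [this]
    exact Submodule.smul_mem _ _ (Submodule.subset_span (Set.mem_range_self i))
  have hspan : Submodule.span D (Set.range fun i => (-M) i) =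
      Submodule.span D (Set.range fun i => M i) := by
    apply le_antisymm
    · exact hle M
    · have := hle (-M)
      simp only [neg_neg] at this
      exact this
  unfold rowRank
  rw [hspan]

lemma rowRank_sub_comm {m n : ℕ} (A B : Matrix (Fin m) (Fin n) D) :
    rowRank (A - B) = rowRank (B - A) := by
  rw [← rowRank_neg (B - A), neg_sub]

/-- factorization of a matrix into independent rank-one pieces -/
lemma factorization {m n : ℕ} (M : Matrix (Fin m) (Fin n) D) :
    ∃ (a : Fin (rowRank M) → Fin m → D) (b : Fin (rowRank M) → Fin n → D),
      M = rosum a b ∧ RIndep a ∧ LinearIndependent D b := by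
  classical
  set p := Submodule.span D (Set.range fun i => M i) with hp
  have hmem : ∀ i, M i ∈ p := fun i => Submodule.subset_span (Set.mem_range_self i)
  let bb : Module.Basis (Fin (rowRank M)) D ↥p := Module.finBasis D ↥p
  refine ⟨fun k i => bb.repr ⟨M i, hmem i⟩ k, fun k => (bb k : Fin n → D), ?_, ?_, ?_⟩
  · ext i j
    rw [rosum_apply]
    have hrow : (⟨M i, hmem i⟩ : ↥p) = ∑ k, bb.repr ⟨M i, hmem i⟩ k • bb k :=
      (bb.sum_repr _).symm
    have : M i = ∑ k, bb.repr ⟨M i, hmem i⟩ k • (bb k : Fin n → D) := by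
      have := congrArg (Subtype.val) hrow
      simpa [-Module.Basis.sum_repr] using this
    have := congrFun this j
    simpa [Finset.sum_apply] using this
  · intro c hc
    let g : ↥p →ₗ[D] D :=
      { toFun := fun w => ∑ k, bb.repr w k * c k
        map_add' := by
          intro w1 w2
          simp [add_mul, Finset.sum_add_distrib]
        map_smul' := by
          intro d w
          simp [Finset.mul_sum, mul_assoc] }
    have hrows : ∀ i, g ⟨M i, hmem i⟩ = 0 := by
      intro i; exact hc i
    have hgtop : ∀ w : ↥p, g w = 0 := by
      have hsp : Submodule.span D (Set.range fun i => (⟨M i, hmem i⟩ : ↥p)) = ⊤ := by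
        apply Submodule.map_injective_of_injective (Submodule.injective_subtype p)
        rw [Submodule.map_span, Submodule.map_top, Submodule.range_subtype]
        have himg : p.subtype '' (Set.range fun i => (⟨M i, hmem i⟩ : ↥p)) =
            Set.range fun i => M i := by
          ext w
          constructor
          · rintro ⟨_, ⟨i, rfl⟩, rfl⟩
            exact ⟨i, rfl⟩
          · rintro ⟨i, rfl⟩
            exact ⟨⟨M i, hmem i⟩, ⟨i, rfl⟩, rfl⟩
        rw [himg, ← hp]
      intro w
      have hw : w ∈ Submodule.span D (Set.range fun i => (⟨M i, hmem i⟩ : ↥p)) := by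
        rw [hsp]; trivial
      have hker : Submodule.span D (Set.range fun i => (⟨M i, hmem i⟩ : ↥p)) ≤
          LinearMap.ker g := by
        rw [Submodule.span_le]
        rintro _ ⟨i, rfl⟩
        exact hrows i
      exact hker hw
    funext k0
    have := hgtop (bb k0)
    have hval : g (bb k0) = c k0 := by
      show (∑ k, bb.repr (bb k0) k * c k) = c k0
      rw [bb.repr_self]
      rw [Finset.sum_eq_single k0]
      · simp
      · intro k _ hk
        simp [Finsupp.single_apply, Ne.symm hk]
      · intro hk
        exact absurd (Finset.mem_univ k0) hk
    rw [hval] at this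
    simpa using this
  · exact bb.linearIndependent.map' p.subtype (Submodule.ker_subtype p)

lemma factorization' {m n r : ℕ} (M : Matrix (Fin m) (Fin n) D) (hr : rowRank M = r) :
    ∃ (a : Fin r → Fin m → D) (b : Fin r → Fin n → D),
      M = rosum a b ∧ RIndep a ∧ LinearIndependent D b := by
  subst hr
  exact factorization M

lemma exists_ro_of_rowRank_le_one {m n : ℕ} {M : Matrix (Fin m) (Fin n) D}
    (h : rowRank M ≤ 1) : ∃ u v, M = ro u v := by
  rcases Nat.le_one_iff_eq_zero_or_eq_one.mp h with h0 | h1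
  · refine ⟨0, 0, ?_⟩
    rw [eq_zero_of_rowRank_eq_zero h0]
    ext i j; simp [ro]
  · obtain ⟨a, b, hM, _, _⟩ := factorization' M h1
    refine ⟨a 0, b 0, ?_⟩
    rw [hM]
    ext i j
    rw [rosum_apply, Fin.sum_univ_one]
    rfl

/-- rank-one matrices factor with nonzero vectors -/
lemma exists_ro_of_rowRank_eq_one {m n : ℕ} {M : Matrix (Fin m) (Fin n) D}
    (h : rowRank M = 1) : ∃ u v, u ≠ 0 ∧ v ≠ 0 ∧ M = ro u v := by
  obtain ⟨u, v, rfl⟩ := exists_ro_of_rowRank_le_one (le_of_eq h)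
  by_cases hu : u = 0
  · rw [hu] at h
    rw [show ro 0 v = (0 : Matrix (Fin m) (Fin n) D) from by ext i j; simp [ro]] at h
    rw [rowRank_zero] at h
    exact absurd h (by norm_num)
  by_cases hv : v = 0
  · rw [hv] at h
    rw [show ro u 0 = (0 : Matrix (Fin m) (Fin n) D) from by ext i j; simp [ro]] at h
    rw [rowRank_zero] at h
    exact absurd h (by norm_num)
  exact ⟨u, v, hu, hv, rfl⟩

lemma rowRank_ro_le_one {m n : ℕ} (u : Fin m → D) (v : Fin n → D) :
    rowRank (ro u v) ≤ 1 := by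
  by_cases hu : u = 0
  · rw [hu, ro_zero_left, rowRank_zero]; omega
  by_cases hv : v = 0
  · rw [hv, ro_zero_right, rowRank_zero]; omega
  rw [rowRank_ro hu hv]

/-- reduce a pair spanning a line to a multiple -/
lemma reduce_pair {q : ℕ} {x y : Fin q → D} (hx : x ≠ 0)
    (h : Module.finrank D (Submodule.span D (Set.range ![x, y])) ≤ 1) :
    ∃ c : D, y = c • x := by
  have h1 : Submodule.span D {x} ≤ Submodule.span D (Set.range ![x, y]) := by
    apply Submodule.span_mono
    intro z hz
    rw [Set.mem_singleton_iff] at hz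
    exact ⟨0, by rw [hz]; rfl⟩
  have h2 : Module.finrank D (Submodule.span D (Set.range ![x, y])) ≤
      Module.finrank D (Submodule.span D ({x} : Set (Fin q → D))) := by
    rw [finrank_span_singleton hx]
    exact h
  have heq := Submodule.eq_of_le_of_finrank_le h1 h2
  have hy : y ∈ Submodule.span D ({x} : Set (Fin q → D)) := by
    rw [heq]
    exact Submodule.subset_span ⟨1, rfl⟩
  obtain ⟨c, hc⟩ := Submodule.mem_span_singleton.mp hy
  exact ⟨c, hc.symm⟩

----------------------------------------------------------------
-- padding lemmas
----------------------------------------------------------------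

/-- extension of a column vector by zeros -/
def padc (m p : ℕ) (u : Fin m → D) : Fin p → D :=
  fun i => if h : (i : ℕ) < m then u ⟨i, h⟩ else 0

/-- extension of a row vector by zeros -/
def padr (n q : ℕ) (v : Fin n → D) : Fin q → D :=
  fun j => if h : (j : ℕ) < n then v ⟨j, h⟩ else 0

variable {m n p q : ℕ}

lemma pad_ro (u : Fin m → D) (v : Fin n → D) :
    pad p q (ro u v) = ro (padc m p u) (padr n q v) := by
  ext i j
  simp only [pad, Matrix.of_apply, ro_apply, padc, padr]
  by_cases hi : (i : ℕ) < m <;> by_cases hj : (j : ℕ) < n <;> simp [hi, hj]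

lemma pad_add (A B : Matrix (Fin m) (Fin n) D) :
    pad p q (A + B) = pad p q A + pad p q B := by
  ext i j
  simp only [pad, Matrix.of_apply, Matrix.add_apply]
  by_cases hi : (i : ℕ) < m <;> by_cases hj : (j : ℕ) < n <;> simp [hi, hj]

lemma pad_sub (A B : Matrix (Fin m) (Fin n) D) :
    pad p q (A - B) = pad p q A - pad p q B := by
  ext i j
  simp only [pad, Matrix.of_apply, Matrix.sub_apply]
  by_cases hi : (i : ℕ) < m <;> by_cases hj : (j : ℕ) < n <;> simp [hi, hj]

lemma pad_zero : pad p q (0 : Matrix (Fin m) (Fin n) D) = 0 := by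
  ext i j
  simp only [pad, Matrix.of_apply, Matrix.zero_apply]
  by_cases hi : (i : ℕ) < m <;> by_cases hj : (j : ℕ) < n <;> simp [hi, hj]

lemma padc_zero : padc m p (0 : Fin m → D) = 0 := by
  funext i; simp [padc]

lemma padr_zero : padr n q (0 : Fin n → D) = 0 := by
  funext j; simp [padr]

lemma padc_restrict (hmp : m ≤ p) (u : Fin m → D) (i : Fin m) :
    padc m p u ⟨(i : ℕ), lt_of_lt_of_le i.isLt hmp⟩ = u i := by
  simp [padc]

lemma padr_restrict (hnq : n ≤ q) (v : Fin n → D) (j : Fin n) :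
    padr n q v ⟨(j : ℕ), lt_of_lt_of_le j.isLt hnq⟩ = v j := by
  simp [padr]

lemma padc_inj (hmp : m ≤ p) {u w : Fin m → D} (h : padc m p u = padc m p w) : u = w := by
  funext i
  have := congrFun h ⟨(i : ℕ), lt_of_lt_of_le i.isLt hmp⟩
  rwa [padc_restrict hmp, padc_restrict hmp] at this

lemma padr_inj (hnq : n ≤ q) {v x : Fin n → D} (h : padr n q v = padr n q x) : v = x := by
  funext j
  have := congrFun h ⟨(j : ℕ), lt_of_lt_of_le j.isLt hnq⟩
  rwa [padr_restrict hnq, padr_restrict hnq] at this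

lemma padc_ne_zero (hmp : m ≤ p) {u : Fin m → D} (hu : u ≠ 0) : padc m p u ≠ 0 := by
  intro hz
  exact hu (padc_inj hmp (by rw [hz, padc_zero]))

lemma padr_ne_zero (hnq : n ≤ q) {v : Fin n → D} (hv : v ≠ 0) : padr n q v ≠ 0 := by
  intro hz
  exact hv (padr_inj hnq (by rw [hz, padr_zero]))

lemma padc_rs (u : Fin m → D) (c : D) : padc m p (rs u c) = rs (padc m p u) c := by
  funext i
  by_cases hi : (i : ℕ) < m <;> simp [padc, rs, hi]

lemma padr_smul (c : D) (v : Fin n → D) : padr n q (c • v) = c • padr n q v := by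
  funext j
  by_cases hj : (j : ℕ) < n <;> simp [padr, hj]

lemma padc_add (u w : Fin m → D) : padc m p (u + w) = padc m p u + padc m p w := by
  funext i
  by_cases hi : (i : ℕ) < m <;> simp [padc, hi]

lemma padr_add (v x : Fin n → D) : padr n q (v + x) = padr n q v + padr n q x := by
  funext j
  by_cases hj : (j : ℕ) < n <;> simp [padr, hj]

lemma padr_sub (v x : Fin n → D) : padr n q (v - x) = padr n q v - padr n q x := by
  funext j
  by_cases hj : (j : ℕ) < n <;> simp [padr, hj]

lemma rpar_padc (hmp : m ≤ p) {u w : Fin m → D} (h : RPar (padc m p u) (padc m p w)) :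
    RPar u w := by
  rcases h with ⟨c, hc⟩ | ⟨c, hc⟩
  · left
    refine ⟨c, ?_⟩
    apply padc_inj hmp
    rw [hc, padc_rs]
  · right
    refine ⟨c, ?_⟩
    apply padc_inj hmp
    rw [hc, padc_rs]

lemma lpar_padr (hnq : n ≤ q) {v x : Fin n → D} (h : LPar (padr n q v) (padr n q x)) :
    LPar v x := by
  rcases h with ⟨c, hc⟩ | ⟨c, hc⟩
  · left
    refine ⟨c, ?_⟩
    apply padr_inj hnq
    rw [hc, padr_smul]
  · right
    refine ⟨c, ?_⟩
    apply padr_inj hnq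
    rw [hc, padr_smul]

/-- the first standard basis row vector -/
def eo (n : ℕ) : Fin n → D := fun j => if (j : ℕ) = 0 then 1 else 0

lemma eo_ne_zero (hn : 1 ≤ n) : (eo n : Fin n → D) ≠ 0 := by
  intro hz
  have := congrFun hz ⟨0, hn⟩
  simp [eo] at this

lemma padr_eo (hn : 1 ≤ n) (hnq : n ≤ q) : padr n q (eo n : Fin n → D) = eo q := by
  funext j
  by_cases hj : (j : ℕ) < n
  · simp [padr, eo, hj]
  · have : (j : ℕ) ≠ 0 := by omega
    simp [padr, eo, hj, this]

lemma padc_eo (hm : 1 ≤ m) (hmp : m ≤ p) : padc m p (eo m : Fin m → D) = eo p := by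
  funext i
  by_cases hi : (i : ℕ) < m
  · simp [padc, eo, hi]
  · have : (i : ℕ) ≠ 0 := by omega
    simp [padc, eo, hi, this]

----------------------------------------------------------------
-- more small lemmas
----------------------------------------------------------------

lemma rpar_symm {m : ℕ} {u w : Fin m → D} (h : RPar u w) : RPar w u := Or.symm h

lemma lpar_symm {n : ℕ} {v x : Fin n → D} (h : LPar v x) : LPar x v := Or.symm h

lemma lpar_neg_right {n : ℕ} {v x : Fin n → D} (h : LPar v (-x)) : LPar v x := by
  rcases h with ⟨c, hc⟩ | ⟨c, hc⟩
  · left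
    exact ⟨-c, by rw [hc]; funext j; simp⟩
  · right
    refine ⟨-c, ?_⟩
    have : x = -(c • v) := by rw [← hc]; simp
    rw [this]; funext j; simp

lemma lpar_smul_cancel {n : ℕ} {v x : Fin n → D} {c d : D} (hc : c ≠ 0) (hd : d ≠ 0)
    (h : LPar (c • v) (d • x)) : LPar v x := by
  rcases h with ⟨e, he⟩ | ⟨e, he⟩
  · left
    refine ⟨c⁻¹ * e * d, ?_⟩
    have : c⁻¹ • (c • v) = c⁻¹ • (e • d • x) := by rw [he]
    rw [smul_smul, inv_mul_cancel₀ hc, one_smul] at this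
    rw [this]
    funext j; simp [smul_smul, mul_assoc]
  · right
    refine ⟨d⁻¹ * e * c, ?_⟩
    have : d⁻¹ • (d • x) = d⁻¹ • (e • c • v) := by rw [he]
    rw [smul_smul, inv_mul_cancel₀ hd, one_smul] at this
    rw [this]
    funext j; simp [smul_smul, mul_assoc]

lemma lpar_smul_left {n : ℕ} {v x : Fin n → D} (c : D) (h : LPar v x) : LPar (c • v) x := by
  rcases h with ⟨e, he⟩ | ⟨e, he⟩
  · left; exact ⟨c * e, by rw [he, smul_smul]⟩
  · by_cases hc : c = 0
    · left; exact ⟨0, by simp [hc]⟩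
    · right
      refine ⟨e * c⁻¹, ?_⟩
      rw [he, smul_smul, mul_assoc, inv_mul_cancel₀ hc, mul_one]

lemma ro_eq_zero_right {m n : ℕ} {u : Fin m → D} {x : Fin n → D} (hu : u ≠ 0)
    (h : ro u x = 0) : x = 0 := by
  obtain ⟨i, hi⟩ := Function.ne_iff.mp hu
  have hi' : u i ≠ 0 := by simpa using hi
  funext j
  have := congrFun (congrFun h i) j
  simp only [ro_apply] at this
  have : u i * x j = 0 := this
  rcases mul_eq_zero.mp this with h' | h'
  · exact absurd h' hi'
  · simpa using h'

lemma rowRank_sub_two {m n : ℕ} {u w : Fin m → D} {x y : Fin n → D}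
    (h : ¬ RPar u w) (h' : ¬ LPar x y) : rowRank (ro u x - ro w y) = 2 := by
  have hy : ¬ LPar x (-y) := by
    intro hc
    exact h' (lpar_neg_right hc)
  have := rowRank_two h hy
  rwa [ro_neg_right, ← sub_eq_add_neg] at this

lemma par_of_rank_sub_ne_two {m n : ℕ} {u w : Fin m → D} {x y : Fin n → D}
    (hr : rowRank (ro u x - ro w y) ≠ 2) : RPar u w ∨ LPar x y := by
  by_contra hcon
  push_neg at hcon
  exact hr (rowRank_sub_two hcon.1 hcon.2)

lemma not_lpar_of_lindep_pair {n : ℕ} {x y : Fin n → D}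
    (h : LinearIndependent D ![x, y]) : ¬ LPar x y := by
  rintro (⟨c, hc⟩ | ⟨c, hc⟩)
  · have : (1 : D) • x + (-c) • y = 0 := by rw [hc]; funext j; simp
    have := (lindep_coords h this).1
    simp at this
  · have : (-c) • x + (1 : D) • y = 0 := by rw [hc]; funext j; simp
    have := (lindep_coords h this).2
    simp at this

lemma not_rpar_of_rindep_pair {m : ℕ} {u w : Fin m → D}
    (h : RIndep ![u, w]) : ¬ RPar u w := by
  rintro (⟨c, hc⟩ | ⟨c, hc⟩)
  · have := h ![1, -c] (fun i => by
      simp [Fin.sum_univ_two]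
      have := congrFun hc i
      simp only [rs] at this
      rw [this]; simp [mul_comm])
    have := congrFun this 0
    simp at this
  · have := h ![-c, 1] (fun i => by
      simp [Fin.sum_univ_two]
      have := congrFun hc i
      simp only [rs] at this
      rw [this]; simp [mul_comm])
    have := congrFun this 1
    simp at this

/-- extract a pair from a right-independent family -/
lemma rindep_pair_of_family {s m : ℕ} {a : Fin s → Fin m → D} (ha : RIndep a)
    {k l : Fin s} (hkl : k ≠ l) : RIndep ![a k, a l] := by
  classical
  intro c hc
  set d : Fin s → D := fun j => if j = k then c 0 else if j = l then c 1 else 0 with hd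
  have hsum : ∀ i, ∑ j, a j i * d j = 0 := by
    intro i
    have hzero : ∀ x ∈ (Finset.univ : Finset (Fin s)), x ∉ ({k, l} : Finset (Fin s)) →
        a x i * d x = 0 := by
      intro x _ hx
      simp only [Finset.mem_insert, Finset.mem_singleton] at hx
      push_neg at hx
      simp [hd, hx.1, hx.2]
    rw [← Finset.sum_subset (Finset.subset_univ ({k, l} : Finset (Fin s))) hzero]
    rw [Finset.sum_pair hkl]
    have h1 : d k = c 0 := by simp [hd]
    have h2 : d l = c 1 := by simp [hd, hkl.symm, Ne.symm hkl]
    rw [h1, h2]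
    have := hc i
    simpa [Fin.sum_univ_two] using this
  have := ha d hsum
  funext i
  fin_cases i
  · have := congrFun this k
    simpa [hd] using this
  · have := congrFun this l
    have h2 : d l = c 1 := by simp [hd, Ne.symm hkl]
    rw [h2] at this
    simpa using this

lemma not_rpar_of_rindep_family {s m : ℕ} {a : Fin s → Fin m → D} (ha : RIndep a)
    {k l : Fin s} (hkl : k ≠ l) : ¬ RPar (a k) (a l) :=
  not_rpar_of_rindep_pair (rindep_pair_of_family ha hkl)

lemma not_lpar_of_lindep_family {s n : ℕ} {b : Fin s → Fin n → D} (hb : LinearIndependent D b)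
    {k l : Fin s} (hkl : k ≠ l) : ¬ LPar (b k) (b l) := by
  have hinj : Function.Injective (![k, l] : Fin 2 → Fin s) := by
    intro x y hxy
    fin_cases x <;> fin_cases y <;> simp_all <;> first | rfl | (exact absurd hxy hkl) | (exact absurd hxy.symm hkl)
  have := hb.comp ![k, l] hinj
  have heq : b ∘ ![k, l] = ![b k, b l] := by
    funext i; fin_cases i <;> simp
  rw [heq] at this
  exact not_lpar_of_lindep_pair this

lemma nonzero_of_rindep {s m : ℕ} {a : Fin s → Fin m → D} (ha : RIndep a) (k : Fin s) :
    a k ≠ 0 := by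
  classical
  intro hz
  have := ha (fun j => if j = k then 1 else 0) (fun i => by
    rw [Finset.sum_eq_single k]
    · rw [hz]; simp
    · intro j _ hj; simp [hj]
    · intro hk; exact absurd (Finset.mem_univ k) hk)
  have := congrFun this k
  simp at this

/-- rank-one constraint on a two-term combination: the second row vector is a
multiple of the first -/
lemma rank_one_two_term {m n : ℕ} {u w : Fin m → D} {x y : Fin n → D}
    (h : ¬ RPar u w) (hx : x ≠ 0) (hr : rowRank (ro u x + ro w y) ≤ 1) :
    ∃ c : D, y = c • x := by
  have := rowRank_rosum (rindep_pair h) ![x, y]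
  rw [rosum_two] at this
  rw [this] at hr
  exact reduce_pair hx hr

----------------------------------------------------------------
-- main steps
----------------------------------------------------------------

section main

variable {m n p q : ℕ}

lemma phi_zero (φ : Matrix (Fin m) (Fin n) D → Matrix (Fin p) (Fin q) D)
    (h : ∀ M : Matrix (Fin m) (Fin n) D,
      M ∈ Rvec (eo n) ∪ Lvec (eo m) → φ M = pad p q M) : φ 0 = 0 := by
  have := h 0 (Or.inl ⟨0, fun i j => by simp⟩)
  rwa [pad_zero] at this

lemma stepA (hm : 2 ≤ m) (hn : 2 ≤ n) (hmp : m ≤ p) (hnq : n ≤ q)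
    (φ : Matrix (Fin m) (Fin n) D → Matrix (Fin p) (Fin q) D)
    (hφ : ∀ A B, Adjacent A B → Adjacent (φ A) (φ B))
    (h : ∀ M : Matrix (Fin m) (Fin n) D,
      M ∈ Rvec (eo n) ∪ Lvec (eo m) → φ M = pad p q M)
    {u : Fin m → D} {v : Fin n → D} (hu : ¬ RPar u (eo m)) (hv : ¬ LPar v (eo n)) :
    (∃ d : D, d ≠ 0 ∧ φ (ro u v) = ro (padc m p u) (d • padr n q v)) ∨
    (∃ c : D, c ≠ 0 ∧ φ (ro u v) = ro (eo p) (c • eo q)) := by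
  have hm1 : 1 ≤ m := by omega
  have hn1 : 1 ≤ n := by omega
  have hp1 : 1 ≤ p := by omega
  have hq1 : 1 ≤ q := by omega
  have hu0 : u ≠ 0 := ne_zero_of_not_rpar_left hu
  have hv0 : v ≠ 0 := ne_zero_of_not_lpar_left hv
  have hput : padc m p u ≠ 0 := padc_ne_zero hmp hu0
  have hpvt : padr n q v ≠ 0 := padr_ne_zero hnq hv0
  have hpu : ¬ RPar (padc m p u) (eo p) := by
    intro hc
    rw [← padc_eo (D := D) hm1 hmp] at hc
    exact hu (rpar_padc hmp hc)
  have hpv : ¬ LPar (padr n q v) (eo q) := by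
    intro hc
    rw [← padr_eo (D := D) hn1 hnq] at hc
    exact hv (lpar_padr hnq hc)
  -- φ (ro u v) is rank one
  have hA1 : rowRank (ro u v) = 1 := rowRank_ro hu0 hv0
  have hadj0 : Adjacent (ro u v) 0 := by
    unfold Adjacent; rw [sub_zero]; exact hA1
  have him0 := hφ _ _ hadj0
  rw [Adjacent, phi_zero φ h, sub_zero] at him0
  obtain ⟨at_, bt, hat, hbt, hfA⟩ := exists_ro_of_rowRank_eq_one him0
  -- adjacency with ro u (eo n)
  have hveo : v - eo n ≠ 0 := by
    intro hc
    exact hv (Or.inl ⟨1, by rw [one_smul]; exact sub_eq_zero.mp hc⟩)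
  have hadj1 : Adjacent (ro u v) (ro u (eo n)) := by
    unfold Adjacent
    rw [← ro_sub_right]
    exact rowRank_ro hu0 hveo
  have him1 := hφ _ _ hadj1
  rw [Adjacent, hfA, h (ro u (eo n)) (Or.inl ⟨u, fun i j => rfl⟩), pad_ro,
    padr_eo hn1 hnq] at him1
  have hdis1 : RPar at_ (padc m p u) ∨ LPar bt (eo q) := by
    apply par_of_rank_sub_ne_two
    rw [him1]; omega
  -- adjacency with ro (eo m) v
  have hueo : u - eo m ≠ 0 := by
    intro hc
    exact hu (Or.inl ⟨1, by funext i; simp [rs]; exact (congrFun (sub_eq_zero.mp hc) i)⟩)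
  have hadj2 : Adjacent (ro u v) (ro (eo m) v) := by
    unfold Adjacent
    rw [← ro_sub_left]
    exact rowRank_ro hueo hv0
  have him2 := hφ _ _ hadj2
  rw [Adjacent, hfA, h (ro (eo m) v) (Or.inr ⟨v, fun i j => rfl⟩), pad_ro,
    padc_eo hm1 hmp] at him2
  have hdis2 : RPar at_ (eo p) ∨ LPar bt (padr n q v) := by
    apply par_of_rank_sub_ne_two
    rw [him2]; omega
  rcases hdis1 with hP1 | hQ1
  · rcases hdis2 with hP2 | hQ2
    · -- both RPar: contradiction
      exfalso
      apply hpu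
      exact rpar_trans hat (rpar_symm hP1) hP2
    · -- good case
      left
      obtain ⟨s, hs⟩ := rpar_iff hput (rpar_symm hP1)
      have hs0 : s ≠ 0 := by
        rintro rfl
        apply hat
        rw [hs]; funext i; simp [rs]
      obtain ⟨t, ht⟩ := lpar_iff hpvt (lpar_symm hQ2)
      have ht0 : t ≠ 0 := by
        rintro rfl
        apply hbt
        rw [ht]; simp
      refine ⟨s * t, mul_ne_zero hs0 ht0, ?_⟩
      rw [hfA, hs, ht, ro_rs, smul_smul]
  · rcases hdis2 with hP2 | hQ2
    · -- bad case
      right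
      obtain ⟨s, hs⟩ := rpar_iff (eo_ne_zero hp1) (rpar_symm hP2)
      have hs0 : s ≠ 0 := by
        rintro rfl
        apply hat
        rw [hs]; funext i; simp [rs]
      obtain ⟨t, ht⟩ := lpar_iff (eo_ne_zero hq1) (lpar_symm hQ1)
      have ht0 : t ≠ 0 := by
        rintro rfl
        apply hbt
        rw [ht]; simp
      refine ⟨s * t, mul_ne_zero hs0 ht0, ?_⟩
      rw [hfA, hs, ht, ro_rs, smul_smul]
    · -- both LPar: contradiction
      exfalso
      apply hpv
      exact lpar_symm (lpar_trans hbt (lpar_symm hQ1) hQ2)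

lemma stepB (hm : 2 ≤ m) (hn : 2 ≤ n) (hmp : m ≤ p) (hnq : n ≤ q)
    (φ : Matrix (Fin m) (Fin n) D → Matrix (Fin p) (Fin q) D)
    (hφ : ∀ A B, Adjacent A B → Adjacent (φ A) (φ B))
    (hdeg : ¬ DegZero φ)
    (h : ∀ M : Matrix (Fin m) (Fin n) D,
      M ∈ Rvec (eo n) ∪ Lvec (eo m) → φ M = pad p q M)
    {u : Fin m → D} {v : Fin n → D} (hu : ¬ RPar u (eo m)) (hv : ¬ LPar v (eo n)) :
    ∃ d : D, d ≠ 0 ∧ φ (ro u v) = ro (padc m p u) (d • padr n q v) := by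
  have hm1 : 1 ≤ m := by omega
  have hn1 : 1 ≤ n := by omega
  have hp1 : 1 ≤ p := by omega
  have hq1 : 1 ≤ q := by omega
  rcases stepA hm hn hmp hnq φ hφ h hu hv with hG | hB
  · exact hG
  exfalso
  apply hdeg
  -- one-step propagation of badness
  have hstep : ∀ u1 v1 u2 v2 : _, ¬ RPar u1 (eo m) → ¬ LPar v1 (eo n) →
      ¬ RPar u2 (eo m) → ¬ LPar v2 (eo n) →
      (∃ c : D, c ≠ 0 ∧ φ (ro u1 v1) = ro (eo p) (c • eo q)) →
      Adjacent (ro u1 v1) (ro u2 v2) →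
      (∃ c : D, c ≠ 0 ∧ φ (ro u2 v2) = ro (eo p) (c • eo q)) := by
    intro u1 v1 u2 v2 hu1 hv1 hu2 hv2 ⟨c, hc0, hc⟩ hadj
    rcases stepA hm hn hmp hnq φ hφ h hu2 hv2 with ⟨d, hd0, hG2⟩ | hB2
    · exfalso
      have him := hφ _ _ hadj
      rw [Adjacent, hc, hG2] at him
      have hdis : RPar (eo p) (padc m p u2) ∨
          LPar (c • eo q) (d • padr n q v2) := by
        apply par_of_rank_sub_ne_two
        rw [him]; omega
      rcases hdis with hR | hL
      · rw [← padc_eo (D := D) hm1 hmp] at hR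
        exact hu2 (rpar_symm (rpar_padc hmp hR))
      · have := lpar_smul_cancel hc0 hd0 hL
        rw [← padr_eo (D := D) hn1 hnq] at this
        exact hv2 (lpar_symm (lpar_padr hnq this))
    · exact hB2
  -- all generic rank ones are bad
  have hbad : ∀ u' v' : _, ¬ RPar u' (eo m) → ¬ LPar v' (eo n) →
      ∃ c : D, c ≠ 0 ∧ φ (ro u' v') = ro (eo p) (c • eo q) := by
    intro u' v' hu' hv'
    have hu'0 : u' ≠ 0 := ne_zero_of_not_rpar_left hu'
    have hv'0 : v' ≠ 0 := ne_zero_of_not_lpar_left hv'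
    have hu0 : u ≠ 0 := ne_zero_of_not_rpar_left hu
    have hv0 : v ≠ 0 := ne_zero_of_not_lpar_left hv
    -- step from (u, v) to (u, v')
    have hmid : ∃ c : D, c ≠ 0 ∧ φ (ro u v') = ro (eo p) (c • eo q) := by
      by_cases hvv : v = v'
      · rw [← hvv]; exact hB
      · apply hstep u v u v' hu hv hu hv' hB
        unfold Adjacent
        rw [← ro_sub_right]
        exact rowRank_ro hu0 (sub_ne_zero.mpr hvv)
    -- step from (u, v') to (u', v')
    by_cases huu : u = u'
    · rw [← huu]; exact hmid
    · apply hstep u v' u' v' hu hv' hu' hv' hmid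
      unfold Adjacent
      rw [← ro_sub_left]
      exact rowRank_ro (sub_ne_zero.mpr huu) hv'0
  -- DegZero
  refine ⟨eo p, eo_ne_zero hp1, eo q, eo_ne_zero hq1, ?_⟩
  intro M hM
  obtain ⟨u', v', rfl⟩ := exists_ro_of_rowRank_le_one hM
  by_cases hlv : LPar v' (eo n)
  · -- column type
    obtain ⟨c, hc⟩ := lpar_iff (eo_ne_zero hn1) (lpar_symm hlv)
    have hMform : ro u' v' = ro (rs u' c) (eo n) := by
      rw [hc, ← ro_rs]
    rw [hMform, h (ro (rs u' c) (eo n)) (Or.inl ⟨rs u' c, fun i j => rfl⟩), pad_ro,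
      padr_eo hn1 hnq]
    exact Or.inl ⟨padc m p (rs u' c), fun i j => rfl⟩
  by_cases hru : RPar u' (eo m)
  · -- row type
    obtain ⟨c, hc⟩ := rpar_iff (eo_ne_zero hm1) (rpar_symm hru)
    have hMform : ro u' v' = ro (eo m) (c • v') := by
      rw [hc, ro_rs]
    rw [hMform, h (ro (eo m) (c • v')) (Or.inr ⟨c • v', fun i j => rfl⟩), pad_ro,
      padc_eo hm1 hmp]
    exact Or.inr ⟨padr n q (c • v'), fun i j => rfl⟩
  · -- generic: bad
    obtain ⟨c, hc0, hc⟩ := hbad u' v' hru hlv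
    rw [hc]
    refine Or.inl ⟨rs (eo p) c, fun i j => ?_⟩
    simp only [ro_apply, rs_apply, Pi.smul_apply, smul_eq_mul]
    rw [mul_assoc]

end main

section stepC

variable {m n p q : ℕ}

lemma not_lpar_add_eo (hn1 : 1 ≤ n) {v : Fin n → D} (hv : ¬ LPar v (eo n)) :
    ¬ LPar (v + eo n) (eo n) := by
  rintro (⟨c, hc⟩ | ⟨c, hc⟩)
  · apply hv
    left
    refine ⟨c - 1, ?_⟩
    have h2 : v = c • eo n - eo n := eq_sub_of_add_eq hc
    rw [h2, sub_smul, one_smul]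
  · by_cases hc0 : c = 0
    · exact eo_ne_zero hn1 (by rw [hc, hc0, zero_smul])
    · apply hv
      left
      refine ⟨c⁻¹ * (1 - c), ?_⟩
      have h1 : c • v = (1 - c) • eo n := by
        rw [smul_add] at hc
        rw [sub_smul, one_smul]
        rw [eq_sub_iff_add_eq, ← hc]
      have h2 : v = c⁻¹ • (c • v) := by rw [smul_smul, inv_mul_cancel₀ hc0, one_smul]
      rw [h2, h1, smul_smul]

lemma not_rpar_mix (hm1 : 1 ≤ m) {u : Fin m → D} (hu : ¬ RPar u (eo m)) {ζ : D}
    (hζ : ζ ≠ 0) : ¬ RPar (rs u ζ + rs (eo m) (1 - ζ)) (eo m) := by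
  rintro (⟨c, hc⟩ | ⟨c, hc⟩)
  · apply hu
    left
    refine ⟨(c - (1 - ζ)) * ζ⁻¹, ?_⟩
    funext i
    have := congrFun hc i
    simp only [Pi.add_apply, rs_apply] at this ⊢
    have h1 : u i * ζ = eo m i * (c - (1 - ζ)) := by
      rw [mul_sub]
      rw [← this]
      noncomm_ring
    have := congrArg (fun x => x * ζ⁻¹) h1
    rwa [mul_assoc, mul_inv_cancel₀ hζ, mul_one, mul_assoc] at this
  · by_cases hc0 : c = 0
    · exact eo_ne_zero hm1 (by rw [hc, hc0]; funext i; simp [rs])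
    · apply hu
      left
      refine ⟨(1 - (1 - ζ) * c) * (ζ * c)⁻¹, ?_⟩
      funext i
      have := congrFun hc i
      simp only [Pi.add_apply, rs_apply] at this ⊢
      have h1 : u i * (ζ * c) = eo m i * (1 - (1 - ζ) * c) := by
        linear_combination (norm := noncomm_ring) -this
      have h2 := congrArg (fun x => x * (ζ * c)⁻¹) h1
      rwa [mul_assoc, mul_inv_cancel₀ (mul_ne_zero hζ hc0), mul_one, mul_assoc] at h2

lemma stepC0 (hm : 2 ≤ m) (hn : 2 ≤ n) (hmp : m ≤ p) (hnq : n ≤ q)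
    (φ : Matrix (Fin m) (Fin n) D → Matrix (Fin p) (Fin q) D)
    (hφ : ∀ A B, Adjacent A B → Adjacent (φ A) (φ B))
    (hdeg : ¬ DegZero φ)
    (h : ∀ M : Matrix (Fin m) (Fin n) D,
      M ∈ Rvec (eo n) ∪ Lvec (eo m) → φ M = pad p q M)
    {u : Fin m → D} {v : Fin n → D} (hu : ¬ RPar u (eo m)) (hv : ¬ LPar v (eo n)) :
    φ (ro u v + ro (eo m) (eo n)) = 0 ∨
    (φ (ro u v) = pad p q (ro u v) ∧
      φ (ro u v + ro (eo m) (eo n)) = pad p q (ro u v + ro (eo m) (eo n))) := by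
  have hm1 : 1 ≤ m := by omega
  have hn1 : 1 ≤ n := by omega
  have hp1 : 1 ≤ p := by omega
  have hq1 : 1 ≤ q := by omega
  have hu0 : u ≠ 0 := ne_zero_of_not_rpar_left hu
  have hv0 : v ≠ 0 := ne_zero_of_not_lpar_left hv
  set ut := padc m p u with hut
  set vt := padr n q v with hvt
  have hut0 : ut ≠ 0 := padc_ne_zero hmp hu0
  have hvt0 : vt ≠ 0 := padr_ne_zero hnq hv0
  have hpu : ¬ RPar ut (eo p) := by
    intro hc
    rw [← padc_eo (D := D) hm1 hmp] at hc
    exact hu (rpar_padc hmp hc)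
  have hpv : ¬ LPar vt (eo q) := by
    intro hc
    rw [← padr_eo (D := D) hn1 hnq] at hc
    exact hv (lpar_padr hnq hc)
  have hpue : ¬ RPar (eo p) ut := fun hc => hpu (rpar_symm hc)
  have hpve : ¬ LPar (eo q) vt := fun hc => hpv (lpar_symm hc)
  set A := ro u v with hA
  set C := ro u v + ro (eo m) (eo n) with hC
  set G := φ C with hG
  obtain ⟨d, hd0, hφA⟩ := stepB hm hn hmp hnq φ hφ hdeg h hu hv
  -- adjacency with B0 = ro (eo m) (eo n)
  have hφB0 : φ (ro (eo m) (eo n)) = ro (eo p) (eo q) := by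
    rw [h (ro (eo m) (eo n)) (Or.inl ⟨eo m, fun i j => rfl⟩), pad_ro,
      padc_eo hm1 hmp, padr_eo hn1 hnq]
  have hadjB0 : Adjacent C (ro (eo m) (eo n)) := by
    unfold Adjacent
    rw [add_sub_cancel_right]
    exact rowRank_ro hu0 hv0
  have hK := hφ _ _ hadjB0
  rw [Adjacent, hφB0, ← hG] at hK
  obtain ⟨a, b, ha0, hb0, hab⟩ := exists_ro_of_rowRank_eq_one hK
  -- adjacency with B1 = ro (u + eo m) (eo n)
  have hveo : v - eo n ≠ 0 := by
    intro hc
    exact hv (Or.inl ⟨1, by rw [one_smul]; exact sub_eq_zero.mp hc⟩)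
  have hadjB1 : Adjacent C (ro (u + eo m) (eo n)) := by
    unfold Adjacent
    have hdiff : C - ro (u + eo m) (eo n) = ro u (v - eo n) := by
      ext i j
      simp only [hC, Matrix.sub_apply, Matrix.add_apply, ro_apply, Pi.add_apply,
        Pi.sub_apply]
      noncomm_ring
    rw [hdiff]
    exact rowRank_ro hu0 hveo
  have him1 := hφ _ _ hadjB1
  rw [Adjacent, h (ro (u + eo m) (eo n)) (Or.inl ⟨u + eo m, fun i j => rfl⟩), pad_ro,
    padc_add, padc_eo hm1 hmp, padr_eo hn1 hnq, ← hG, ← hut] at him1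
  have him1' : rowRank (ro a b - ro ut (eo q)) = 1 := by
    have halg : G - ro (ut + eo p) (eo q) = (G - ro (eo p) (eo q)) - ro ut (eo q) := by
      rw [ro_add_left]; abel
    rw [halg, hab] at him1
    exact him1
  have hdis1 : RPar a ut ∨ LPar b (eo q) := by
    apply par_of_rank_sub_ne_two
    rw [him1']; omega
  -- adjacency with A itself
  have hadjA : Adjacent C A := by
    unfold Adjacent
    rw [add_sub_cancel_left]
    exact rowRank_ro (eo_ne_zero hm1) (eo_ne_zero hn1)
  have himA := hφ _ _ hadjA
  rw [Adjacent, hφA, ← hG, ← hut, ← hvt] at himA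
  rcases hdis1 with hP | hQ
  · -- main case : a parallel to ut
    obtain ⟨s, hs⟩ := rpar_iff hut0 (rpar_symm hP)
    have hs0 : s ≠ 0 := by
      rintro rfl
      apply ha0
      rw [hs]; funext i; simp [rs]
    set b' : Fin q → D := s • b with hb'
    have hb'0 : b' ≠ 0 := smul_ne_zero hs0 hb0
    have hKform : G - ro (eo p) (eo q) = ro ut b' := by
      rw [hab, hs, ro_rs, hb']
    -- use adjacency with A: b' = d • vt + lam • eo q
    have himA' : rowRank (ro (eo p) (eo q) + ro ut (b' - d • vt)) = 1 := by
      have halg : G - ro ut (d • vt) =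
          ro (eo p) (eo q) + ro ut (b' - d • vt) := by
        rw [ro_sub_right, ← hKform]; abel
      rw [← halg]
      exact himA
    obtain ⟨lam, hlam⟩ := rank_one_two_term hpue (eo_ne_zero hq1) (le_of_eq himA')
    have hb'd : b' = d • vt + lam • eo q := by
      rw [← hlam]; abel
    -- adjacency with X0 = ro (eo m) (v + eo n)
    have hueo : u - eo m ≠ 0 := by
      intro hc
      exact hu (Or.inl ⟨1, by
        funext i
        simp only [rs_apply, mul_one]
        exact congrFun (sub_eq_zero.mp hc) i⟩)
    have hadjX0 : Adjacent C (ro (eo m) (v + eo n)) := by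
      unfold Adjacent
      have hdiff : C - ro (eo m) (v + eo n) = ro (u - eo m) v := by
        ext i j
        simp only [hC, Matrix.sub_apply, Matrix.add_apply, ro_apply, Pi.add_apply,
          Pi.sub_apply]
        noncomm_ring
      rw [hdiff]
      exact rowRank_ro hueo hv0
    have himX0 := hφ _ _ hadjX0
    rw [Adjacent, h (ro (eo m) (v + eo n)) (Or.inr ⟨v + eo n, fun i j => rfl⟩), pad_ro,
      padc_eo hm1 hmp, padr_add, padr_eo hn1 hnq, ← hG, ← hvt] at himX0
    have himX0' : rowRank (ro (eo p) (-vt) + ro ut (d • vt + lam • eo q)) = 1 := by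
      have halg : G - ro (eo p) (vt + eo q) =
          ro (eo p) (-vt) + ro ut b' := by
        have h1 : G = ro (eo p) (eo q) + ro ut b' := by
          rw [← hKform]; abel
        rw [h1, ro_add_right, ro_neg_right]
        abel
      rw [halg, hb'd] at himX0
      exact himX0
    have hvtneg : (-vt : Fin q → D) ≠ 0 := neg_ne_zero.mpr hvt0
    obtain ⟨c2, hc2⟩ := rank_one_two_term hpue hvtneg (le_of_eq himX0')
    have hcoords : (d + c2) • vt + lam • eo q = 0 := by
      rw [smul_neg] at hc2
      rw [add_smul]
      have := hc2
      rw [eq_neg_iff_add_eq_zero] at this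
      rw [← this]
      abel
    have hlin := lindep_coords (lindep_pair hpv) hcoords
    have hlam0 : lam = 0 := hlin.2
    have hb'' : b' = d • vt := by rw [hb'd, hlam0, zero_smul, add_zero]
    have hGform : G = ro (eo p) (eo q) + ro ut (d • vt) := by
      rw [← hb'', ← hKform]; abel
    by_cases hd1 : d = 1
    · right
      constructor
      · rw [hA, hφA, hd1, one_smul, pad_ro, ← hut, ← hvt]
      · rw [hGform, hd1, one_smul, hC, pad_add, pad_ro, pad_ro, padc_eo hm1 hmp,
          padr_eo hn1 hnq, ← hut, ← hvt]
        abel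
    · -- pin d = 1 via the ζ-family: contradiction
      exfalso
      have h1d : (1 : D) - d⁻¹ ≠ 0 := by
        intro hc
        apply hd1
        have : d⁻¹ = 1 := by linear_combination (norm := noncomm_ring) -hc
        calc d = (d⁻¹)⁻¹ := (inv_inv d).symm
          _ = 1 := by rw [this, inv_one]
      set ζ := ((1 : D) - d⁻¹)⁻¹ with hζdef
      have hζ0 : ζ ≠ 0 := inv_ne_zero h1d
      set w := rs u ζ + rs (eo m) (1 - ζ) with hw
      have hwgen : ¬ RPar w (eo m) := not_rpar_mix hm1 hu hζ0
      have hvegen : ¬ LPar (v + eo n) (eo n) := not_lpar_add_eo hn1 hv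
      obtain ⟨e, he0, hφX⟩ := stepB hm hn hmp hnq φ hφ hdeg h hwgen hvegen
      -- adjacency C ~ Xζ
      have hzne : ((1 : D) - ζ) • v - ζ • eo n ≠ 0 := by
        intro hc
        have : ((1 : D) - ζ) • v + (-ζ) • eo n = 0 := by
          rw [neg_smul, ← sub_eq_add_neg]
          exact hc
        have hlin := lindep_coords (lindep_pair hv) this
        exact hζ0 (neg_eq_zero.mp hlin.2)
      have hweo : u - eo m ≠ 0 := by
        intro hc
        exact hu (Or.inl ⟨1, by
          funext i
          simp only [rs_apply, mul_one]
          exact congrFun (sub_eq_zero.mp hc) i⟩)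
      have hadjX : Adjacent C (ro w (v + eo n)) := by
        unfold Adjacent
        have hdiff : C - ro w (v + eo n) =
            ro (u - eo m) (((1 : D) - ζ) • v - ζ • eo n) := by
          ext i j
          simp only [hC, hw, Matrix.sub_apply, Matrix.add_apply, ro_apply, Pi.add_apply,
            Pi.sub_apply, Pi.smul_apply, rs_apply, smul_eq_mul]
          noncomm_ring
        rw [hdiff]
        exact rowRank_ro hweo hzne
      have himX := hφ _ _ hadjX
      rw [Adjacent, hφX, ← hG] at himX
      -- rewrite φ Xζ in padded coordinates
      have hpadw : padc m p w = rs ut ζ + rs (eo p) (1 - ζ) := by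
        rw [hw, padc_add, padc_rs, padc_rs, padc_eo hm1 hmp, hut]
      have hpadve : padr n q (v + eo n) = vt + eo q := by
        rw [padr_add, padr_eo hn1 hnq, hvt]
      set p1 : D := d - ζ * e with hp1def
      set p2 : D := -(ζ * e) with hp2def
      set q1 : D := -((1 - ζ) * e) with hq1def
      set q2 : D := 1 - (1 - ζ) * e with hq2def
      have himX' : rowRank (ro ut (p1 • vt + p2 • eo q) +
          ro (eo p) (q1 • vt + q2 • eo q)) = 1 := by
        have halg : G - ro (padc m p w) (e • padr n q (v + eo n)) =
            ro ut (p1 • vt + p2 • eo q) + ro (eo p) (q1 • vt + q2 • eo q) := by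
          rw [hGform, hpadw, hpadve, ro_add_left, ro_rs, ro_rs]
          ext i j
          simp only [Matrix.sub_apply, Matrix.add_apply, ro_apply, Pi.add_apply,
            Pi.smul_apply, smul_eq_mul, hp1def, hp2def, hq1def, hq2def]
          noncomm_ring
        rw [halg] at himX
        exact himX
      have hP0 : p1 • vt + p2 • eo q ≠ 0 := by
        intro hc
        have hlin := lindep_coords (lindep_pair hpv) hc
        apply mul_ne_zero hζ0 he0
        have := hlin.2
        rw [hp2def] at this
        exact neg_eq_zero.mp this
      have hpuu : ¬ RPar ut (eo p) := hpu
      obtain ⟨θ, hθ⟩ := rank_one_two_term hpuu hP0 (le_of_eq himX')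
      have hcoords : (q1 - θ * p1) • vt + (q2 - θ * p2) • eo q = 0 := by
        have : q1 • vt + q2 • eo q - θ • (p1 • vt + p2 • eo q) = 0 := by
          rw [← hθ]; abel
        rw [smul_add, smul_smul, smul_smul] at this
        rw [sub_smul, sub_smul]
        rw [← this]
        abel
      have hlin := lindep_coords (lindep_pair hpv) hcoords
      have heq1 : q1 = θ * p1 := by
        have := hlin.1
        linear_combination (norm := noncomm_ring) this
      have heq2 : q2 = θ * p2 := by
        have := hlin.2
        linear_combination (norm := noncomm_ring) this
      -- θ * d = -1
      have hθd : θ * d = -1 := by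
        have h1 : q1 = θ * d - θ * (ζ * e) := by
          rw [heq1, hp1def, mul_sub]
        have h2 : q2 = -(θ * (ζ * e)) := by
          rw [heq2, hp2def, mul_neg]
        -- q2 - q1 = 1 - e + ... compute : q2 - q1 = 1 - (1-ζ)e + (1-ζ)e = 1
        have h3 : q2 - q1 = 1 := by
          rw [hq1def, hq2def]; noncomm_ring
        have h4 : q2 - q1 = -(θ * d) := by
          rw [h1, h2]; noncomm_ring
        rw [h3] at h4
        linear_combination (norm := noncomm_ring) h4
      have hθval : θ = -d⁻¹ := by
        have : θ * d * d⁻¹ = -1 * d⁻¹ := by rw [hθd]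
        rwa [mul_assoc, mul_inv_cancel₀ hd0, mul_one, neg_one_mul] at this
      -- final contradiction : ((1-ζ) + d⁻¹ ζ) e = 1 with coefficient zero
      have hfin : ((1 - ζ) + d⁻¹ * ζ) * e = 1 := by
        have h2 : q2 = -(θ * (ζ * e)) := by
          rw [heq2, hp2def, mul_neg]
        rw [hθval] at h2
        rw [hq2def] at h2
        -- 1 - (1-ζ)e = d⁻¹ ζ e
        linear_combination (norm := noncomm_ring) -h2
      have hcoeff : (1 - ζ) + d⁻¹ * ζ = 0 := by
        have : ((1 : D) - d⁻¹) * ζ = 1 := by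
          rw [hζdef, mul_inv_cancel₀ h1d]
        linear_combination (norm := noncomm_ring) -this
      rw [hcoeff, zero_mul] at hfin
      exact one_ne_zero hfin.symm
  · -- degenerate-looking case : b parallel to eo q ; conclude G = 0 or contradiction
    obtain ⟨cb, hcb⟩ := lpar_iff (eo_ne_zero hq1) (lpar_symm hQ)
    have hcb0 : cb ≠ 0 := by
      rintro rfl
      exact hb0 (by rw [hcb, zero_smul])
    have hKform : G - ro (eo p) (eo q) = ro (rs a cb) (eo q) := by
      rw [hab, hcb, ← ro_rs]
    -- adjacency with B2 = ro (eo m) (eo n - v)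
    have hueo' : u + eo m ≠ 0 := by
      intro hc
      apply hu
      left
      refine ⟨-1, ?_⟩
      funext i
      have h0 : u i + eo m i = 0 := by
        have := congrFun hc i
        simpa using this
      simp only [rs_apply, mul_neg_one]
      linear_combination (norm := noncomm_ring) h0
    have hadjB2 : Adjacent C (ro (eo m) (eo n - v)) := by
      unfold Adjacent
      have hdiff : C - ro (eo m) (eo n - v) = ro (u + eo m) v := by
        ext i j
        simp only [hC, Matrix.sub_apply, Matrix.add_apply, ro_apply, Pi.add_apply,
          Pi.sub_apply]
        noncomm_ring
      rw [hdiff]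
      exact rowRank_ro hueo' hv0
    have himB2 := hφ _ _ hadjB2
    rw [Adjacent, h (ro (eo m) (eo n - v)) (Or.inr ⟨eo n - v, fun i j => rfl⟩), pad_ro,
      padc_eo hm1 hmp, padr_sub, padr_eo hn1 hnq, ← hG, ← hvt] at himB2
    have himB2' : rowRank (ro (rs a cb) (eo q) + ro (eo p) vt) = 1 := by
      have halg : G - ro (eo p) (eo q - vt) =
          (G - ro (eo p) (eo q)) + ro (eo p) vt := by
        rw [ro_sub_right]; abel
      rw [halg, hKform] at himB2
      exact himB2
    have hdis2 : RPar (rs a cb) (eo p) ∨ LPar (eo q) vt := by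
      apply par_of_rank_ne_two
      rw [himB2']; omega
    rcases hdis2 with hR | hL
    · -- G is supported on the first column
      have hacb0 : rs a cb ≠ 0 := by
        intro hc
        apply ha0
        funext i
        have := congrFun hc i
        simp only [rs_apply] at this
        rcases mul_eq_zero.mp this with h' | h'
        · exact h'
        · exact absurd h' hcb0
      obtain ⟨k, hk⟩ := rpar_iff (eo_ne_zero hp1) (rpar_symm hR)
      have hGform : G = ro (eo p) (((1 : D) + k) • eo q) := by
        have h1 : G = ro (eo p) (eo q) + ro (rs (eo p) k) (eo q) := by
          rw [← hk, ← hKform]; abel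
        rw [h1, ro_rs, ← ro_add_right, add_smul, one_smul]
      by_cases h1k : (1 : D) + k = 0
      · left
        rw [hGform, h1k, zero_smul, ro_zero_right]
      · exfalso
        have hrank2 : rowRank (ro (eo p) (((1 : D) + k) • eo q) - ro ut (d • vt)) = 2 := by
          apply rowRank_sub_two
          · exact fun hc => hpu (rpar_symm hc)
          · intro hc
            exact hpve (lpar_smul_cancel h1k hd0 hc)
        rw [hGform] at himA
        rw [himA] at hrank2
        omega
    · exfalso
      exact hpve hL

end stepC

section stepCD

variable {m n p q : ℕ}

lemma stepC (hm : 2 ≤ m) (hn : 2 ≤ n) (hmp : m ≤ p) (hnq : n ≤ q)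
    (φ : Matrix (Fin m) (Fin n) D → Matrix (Fin p) (Fin q) D)
    (hφ : ∀ A B, Adjacent A B → Adjacent (φ A) (φ B))
    (hdeg : ¬ DegZero φ)
    (h : ∀ M : Matrix (Fin m) (Fin n) D,
      M ∈ Rvec (eo n) ∪ Lvec (eo m) → φ M = pad p q M)
    {u : Fin m → D} {v : Fin n → D} (hu : ¬ RPar u (eo m)) (hv : ¬ LPar v (eo n)) :
    φ (ro u v) = pad p q (ro u v) := by
  have hm1 : 1 ≤ m := by omega
  have hn1 : 1 ≤ n := by omega
  have hp1 : 1 ≤ p := by omega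
  have hq1 : 1 ≤ q := by omega
  have hu0 : u ≠ 0 := ne_zero_of_not_rpar_left hu
  rcases stepC0 hm hn hmp hnq φ hφ hdeg h hu hv with h0 | ⟨hA, _⟩
  · exfalso
    -- neighbour anchor built on v + eo n
    have hvegen : ¬ LPar (v + eo n) (eo n) := not_lpar_add_eo hn1 hv
    have hadj : Adjacent (ro u (v + eo n) + ro (eo m) (eo n))
        (ro u v + ro (eo m) (eo n)) := by
      unfold Adjacent
      have hdiff : (ro u (v + eo n) + ro (eo m) (eo n)) -
          (ro u v + ro (eo m) (eo n)) = ro u (eo n) := by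
        ext i j
        simp only [Matrix.sub_apply, Matrix.add_apply, ro_apply, Pi.add_apply]
        noncomm_ring
      rw [hdiff]
      exact rowRank_ro hu0 (eo_ne_zero hn1)
    have him := hφ _ _ hadj
    rw [Adjacent, h0, sub_zero] at him
    rcases stepC0 hm hn hmp hnq φ hφ hdeg h hu hvegen with h0' | ⟨_, hC'⟩
    · rw [h0', rowRank_zero] at him
      omega
    · rw [hC'] at him
      have hpadC' : pad p q (ro u (v + eo n) + ro (eo m) (eo n)) =
          ro (padc m p u) (padr n q v + eo q) + ro (eo p) (eo q) := by
        rw [pad_add, pad_ro, pad_ro, padc_eo hm1 hmp, padr_eo hn1 hnq, padr_add,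
          padr_eo hn1 hnq]
      rw [hpadC'] at him
      have hrank2 : rowRank (ro (padc m p u) (padr n q v + eo q) +
          ro (eo p) (eo q)) = 2 := by
        apply rowRank_two
        · intro hc
          rw [← padc_eo (D := D) hm1 hmp] at hc
          exact hu (rpar_padc hmp hc)
        · intro hc
          have : LPar (padr n q (v + eo n)) (padr n q (eo n)) := by
            rw [padr_add, padr_eo hn1 hnq]
            exact hc
          exact (not_lpar_add_eo hn1 hv) (lpar_padr hnq this)
      rw [hrank2] at him
      omega
  · exact hA

lemma stepD (hm : 2 ≤ m) (hn : 2 ≤ n) (hmp : m ≤ p) (hnq : n ≤ q)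
    (φ : Matrix (Fin m) (Fin n) D → Matrix (Fin p) (Fin q) D)
    (hφ : ∀ A B, Adjacent A B → Adjacent (φ A) (φ B))
    (hdeg : ¬ DegZero φ)
    (h : ∀ M : Matrix (Fin m) (Fin n) D,
      M ∈ Rvec (eo n) ∪ Lvec (eo m) → φ M = pad p q M)
    {M : Matrix (Fin m) (Fin n) D} (hM : rowRank M ≤ 1) : φ M = pad p q M := by
  have hm1 : 1 ≤ m := by omega
  have hn1 : 1 ≤ n := by omega
  obtain ⟨u, v, rfl⟩ := exists_ro_of_rowRank_le_one hM
  by_cases hlv : LPar v (eo n)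
  · obtain ⟨c, hc⟩ := lpar_iff (eo_ne_zero hn1) (lpar_symm hlv)
    have hMform : ro u v = ro (rs u c) (eo n) := by rw [hc, ← ro_rs]
    rw [hMform]
    exact h (ro (rs u c) (eo n)) (Or.inl ⟨rs u c, fun i j => rfl⟩)
  by_cases hru : RPar u (eo m)
  · obtain ⟨c, hc⟩ := rpar_iff (eo_ne_zero hm1) (rpar_symm hru)
    have hMform : ro u v = ro (eo m) (c • v) := by rw [hc, ro_rs]
    rw [hMform]
    exact h (ro (eo m) (c • v)) (Or.inr ⟨c • v, fun i j => rfl⟩)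
  · exact stepC hm hn hmp hnq φ hφ hdeg h hru hlv

end stepCD

----------------------------------------------------------------
-- step E helpers
----------------------------------------------------------------

lemma lindep_pair_of_family {s n : ℕ} {b : Fin s → Fin n → D} (hb : LinearIndependent D b)
    {k l : Fin s} (hkl : k ≠ l) : LinearIndependent D ![b k, b l] := by
  have hinj : Function.Injective (![k, l] : Fin 2 → Fin s) := by
    intro x y hxy
    fin_cases x <;> fin_cases y <;> simp_all
  have := hb.comp ![k, l] hinj
  have heq : b ∘ ![k, l] = ![b k, b l] := by
    funext i; fin_cases i <;> simp
  rwa [heq] at this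

lemma rosum_eq_two {m n : ℕ} (a : Fin 2 → Fin m → D) (b : Fin 2 → Fin n → D) :
    rosum a b = ro (a 0) (b 0) + ro (a 1) (b 1) := by
  unfold rosum
  rw [Fin.sum_univ_two]

lemma rosum_reindex {s m n : ℕ} (e : Fin s ≃ Fin s) (a : Fin s → Fin m → D)
    (b : Fin s → Fin n → D) : rosum (a ∘ e) (b ∘ e) = rosum a b := by
  unfold rosum
  exact Fintype.sum_equiv e _ _ (fun k => rfl)

lemma rindep_reindex {s m : ℕ} (e : Fin s ≃ Fin s) {a : Fin s → Fin m → D}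
    (ha : RIndep a) : RIndep (a ∘ e) := by
  intro c hc
  have : ∀ i, ∑ k, a k i * (c ∘ e.symm) k = 0 := by
    intro i
    rw [← Fintype.sum_equiv e (fun k => a (e k) i * c k)
      (fun k => a k i * (c ∘ e.symm) k) (fun k => by simp)]
    exact hc i
  have h0 := ha _ this
  funext k
  have := congrFun h0 (e k)
  simpa using this

/-- removing a perturbed rank-one term drops the rank -/
lemma rowRank_rosum_sub_ro {r m n : ℕ} {a : Fin r → Fin m → D} {b : Fin r → Fin n → D}
    (ha : RIndep a) (hb : LinearIndependent D b) (k l : Fin r) (hkl : l ≠ k) (t : D) :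
    rowRank (rosum a b - ro (a k) (b k + t • b l)) < r := by
  classical
  have hdiff : rosum a b - ro (a k) (b k + t • b l) =
      rosum a (Function.update b k (-(t • b l))) := by
    ext i j
    rw [Matrix.sub_apply, rosum_apply, rosum_apply, ro_apply]
    rw [← Finset.sum_erase_add _ _ (Finset.mem_univ k),
      ← Finset.sum_erase_add _ (fun k' => a k' i * Function.update b k (-(t • b l)) k' j)
        (Finset.mem_univ k)]
    have hcongr : ∀ k' ∈ Finset.univ.erase k,
        a k' i * Function.update b k (-(t • b l)) k' j = a k' i * b k' j := by
      intro k' hk'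
      rw [Function.update_of_ne (Finset.ne_of_mem_erase hk')]
    rw [Finset.sum_congr rfl hcongr]
    rw [Function.update_self]
    simp only [Pi.add_apply, Pi.smul_apply, Pi.neg_apply, smul_eq_mul]
    noncomm_ring
  rw [hdiff, rowRank_rosum ha]
  have hbl : LinearIndependent D (fun j : {j : Fin r // j ≠ k} => b (j : Fin r)) :=
    hb.comp _ Subtype.val_injective
  set V := Submodule.span D (Set.range fun j : {j : Fin r // j ≠ k} => b (j : Fin r))
    with hV
  have hle : Submodule.span D (Set.range (Function.update b k (-(t • b l)))) ≤ V := by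
    rw [Submodule.span_le]
    rintro _ ⟨j', rfl⟩
    by_cases hj : j' = k
    · rw [hj, Function.update_self]
      have : -(t • b l) = (-t) • b l := by rw [neg_smul]
      rw [this]
      exact Submodule.smul_mem _ _
        (Submodule.subset_span (Set.mem_range_self (⟨l, hkl⟩ : {j : Fin r // j ≠ k})))
    · rw [Function.update_of_ne hj]
      exact Submodule.subset_span (Set.mem_range_self (⟨j', hj⟩ : {j : Fin r // j ≠ k}))
  have hVr : Module.finrank D V = r - 1 := by
    rw [hV, finrank_span_eq_card hbl]
    simp [Fintype.card_subtype_compl]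
  have hrle := Submodule.finrank_mono hle
  rw [hVr] at hrle
  have hr1 : 1 ≤ r := by
    have := k.isLt
    omega
  omega

section stepE

variable {m n p q : ℕ}

/-- the index-0 analysis for a rank-two matrix -/
lemma stepE_index (hmp : m ≤ p) (hnq : n ≤ q)
    {a : Fin 2 → Fin m → D} {b : Fin 2 → Fin n → D}
    (ha : RIndep a) (hb : LinearIndependent D b)
    {W : Matrix (Fin p) (Fin q) D}
    (hcon : ∀ X : Matrix (Fin m) (Fin n) D, rowRank X = 1 →
      rowRank (rosum a b - X) ≤ 1 → rowRank (W + pad p q X) = 1) :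
    (∃ γ : D, W = ro (padc m p (a 0)) (γ • padr n q (b 0))) ∨
    (∃ γ : D, γ ≠ 0 ∧
      W = ro (padc m p (a 1)) (γ • padr n q (b 1)) - ro (padc m p (a 0)) (padr n q (b 0))) := by
  have h01 : (0 : Fin 2) ≠ 1 := by decide
  have ha0 := nonzero_of_rindep ha 0
  have ha1 := nonzero_of_rindep ha 1
  have hb0 := hb.ne_zero 0
  have hb1 := hb.ne_zero 1
  have hnr : ¬ RPar (a 0) (a 1) := not_rpar_of_rindep_family ha h01
  have hnl : ¬ LPar (b 0) (b 1) := not_lpar_of_lindep_family hb h01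
  have hnrp : ¬ RPar (padc m p (a 0)) (padc m p (a 1)) := fun hc => hnr (rpar_padc hmp hc)
  have hnlp : ¬ LPar (padr n q (b 0)) (padr n q (b 1)) := fun hc => hnl (lpar_padr hnq hc)
  have hpa0 : padc m p (a 0) ≠ 0 := padc_ne_zero hmp ha0
  have hpa1 : padc m p (a 1) ≠ 0 := padc_ne_zero hmp ha1
  have hpb0 : padr n q (b 0) ≠ 0 := padr_ne_zero hnq hb0
  have hpb1 : padr n q (b 1) ≠ 0 := padr_ne_zero hnq hb1
  have hM2 : rosum a b = ro (a 0) (b 0) + ro (a 1) (b 1) := rosum_eq_two a b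
  -- base constraint : R0 = W + pad (ro (a 0) (b 0)) has rank one
  have hR0 : rowRank (W + ro (padc m p (a 0)) (padr n q (b 0))) = 1 := by
    have := hcon (ro (a 0) (b 0)) (rowRank_ro ha0 hb0) (by
      rw [hM2, add_sub_cancel_left]
      exact rowRank_ro_le_one _ _)
    rwa [pad_ro] at this
  obtain ⟨α, β, hα, hβ, hR0eq⟩ := exists_ro_of_rowRank_eq_one hR0
  have hW : W = ro α β - ro (padc m p (a 0)) (padr n q (b 0)) := eq_sub_of_add_eq hR0eq
  -- perturbed constraint in the row direction
  have hb01 : b 0 + b 1 ≠ 0 := by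
    intro hc
    have : (1 : D) • b 0 + (1 : D) • b 1 = 0 := by
      rw [one_smul, one_smul]; exact hc
    have := (lindep_coords (lindep_pair_of_family hb h01) this).1
    simp at this
  have hMX1t : rosum a b - ro (a 0) (b 0 + b 1) = ro (a 1 - a 0) (b 1) := by
    ext i j
    rw [Matrix.sub_apply, rosum_apply, Fin.sum_univ_two, ro_apply, ro_apply]
    simp only [Pi.add_apply, Pi.sub_apply]
    noncomm_ring
  have hd1 : rowRank (ro α β + ro (padc m p (a 0)) (padr n q (b 1))) = 1 := by
    have := hcon (ro (a 0) (b 0 + b 1)) (rowRank_ro ha0 hb01) (by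
      rw [hMX1t]; exact rowRank_ro_le_one _ _)
    rw [pad_ro, padr_add] at this
    have halg : W + ro (padc m p (a 0)) (padr n q (b 0) + padr n q (b 1)) =
        (W + ro (padc m p (a 0)) (padr n q (b 0))) + ro (padc m p (a 0)) (padr n q (b 1)) := by
      rw [ro_add_right]; abel
    rw [halg, hR0eq] at this
    exact this
  have hdis1 : RPar α (padc m p (a 0)) ∨ LPar β (padr n q (b 1)) := by
    apply par_of_rank_ne_two
    rw [hd1]; omega
  -- perturbed constraint in the column direction
  have ha01 : a 0 + a 1 ≠ 0 := by
    intro hc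
    have := rindep_pair_of_family ha h01 ![1, 1] (fun i => by
      simp only [Fin.sum_univ_two, Matrix.cons_val_zero, Matrix.cons_val_one,
        Matrix.head_cons, mul_one]
      exact congrFun hc i)
    have := congrFun this 0
    simp at this
  have hMY1 : rosum a b - ro (a 0 + a 1) (b 0) = ro (a 1) (b 1 - b 0) := by
    ext i j
    rw [Matrix.sub_apply, rosum_apply, Fin.sum_univ_two, ro_apply, ro_apply]
    simp only [Pi.add_apply, Pi.sub_apply]
    noncomm_ring
  have hd2 : rowRank (ro α β + ro (padc m p (a 1)) (padr n q (b 0))) = 1 := by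
    have := hcon (ro (a 0 + a 1) (b 0)) (rowRank_ro ha01 hb0) (by
      rw [hMY1]; exact rowRank_ro_le_one _ _)
    rw [pad_ro, padc_add] at this
    have halg : W + ro (padc m p (a 0) + padc m p (a 1)) (padr n q (b 0)) =
        (W + ro (padc m p (a 0)) (padr n q (b 0))) + ro (padc m p (a 1)) (padr n q (b 0)) := by
      rw [ro_add_left]; abel
    rw [halg, hR0eq] at this
    exact this
  have hdis2 : RPar α (padc m p (a 1)) ∨ LPar β (padr n q (b 0)) := by
    apply par_of_rank_ne_two
    rw [hd2]; omega
  rcases hdis1 with hP1 | hQ1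
  · rcases hdis2 with hP2 | hQ2
    · exfalso
      exact hnrp (rpar_trans hα (rpar_symm hP1) hP2)
    · -- α ∥ a0, β ∥ b0
      left
      obtain ⟨s, hs⟩ := rpar_iff hpa0 (rpar_symm hP1)
      obtain ⟨c, hc⟩ := lpar_iff hpb0 (lpar_symm hQ2)
      refine ⟨s * c - 1, ?_⟩
      rw [hW, hs, hc, ro_rs, smul_smul, sub_smul, one_smul, ro_sub_right]
  · rcases hdis2 with hP2 | hQ2
    · -- α ∥ a1, β ∥ b1
      right
      obtain ⟨s, hs⟩ := rpar_iff hpa1 (rpar_symm hP2)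
      have hs0 : s ≠ 0 := by
        rintro rfl
        apply hα
        rw [hs]; funext i; simp [rs]
      obtain ⟨c, hc⟩ := lpar_iff hpb1 (lpar_symm hQ1)
      have hc0 : c ≠ 0 := by
        rintro rfl
        apply hβ
        rw [hc, zero_smul]
      refine ⟨s * c, mul_ne_zero hs0 hc0, ?_⟩
      rw [hW, hs, hc, ro_rs, smul_smul]
    · exfalso
      exact hnlp (lpar_trans hβ (lpar_symm hQ2) hQ1)

lemma stepE2 (hm : 2 ≤ m) (hn : 2 ≤ n) (hmp : m ≤ p) (hnq : n ≤ q)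
    (φ : Matrix (Fin m) (Fin n) D → Matrix (Fin p) (Fin q) D)
    (hφ : ∀ A B, Adjacent A B → Adjacent (φ A) (φ B))
    (hdeg : ¬ DegZero φ)
    (h : ∀ M : Matrix (Fin m) (Fin n) D,
      M ∈ Rvec (eo n) ∪ Lvec (eo m) → φ M = pad p q M)
    {M : Matrix (Fin m) (Fin n) D} (hr : rowRank M = 2) :
    φ M = pad p q M ∨ φ M = 0 := by
  obtain ⟨a, b, hM, ha, hb⟩ := factorization' M hr
  have h01 : (0 : Fin 2) ≠ 1 := by decide
  have hnr : ¬ RPar (a 0) (a 1) := not_rpar_of_rindep_family ha h01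
  have hnrp : ¬ RPar (padc m p (a 0)) (padc m p (a 1)) := fun hc => hnr (rpar_padc hmp hc)
  have hpa0 : padc m p (a 0) ≠ 0 := padc_ne_zero hmp (nonzero_of_rindep ha 0)
  have hpa1 : padc m p (a 1) ≠ 0 := padc_ne_zero hmp (nonzero_of_rindep ha 1)
  have hpb0 : padr n q (b 0) ≠ 0 := padr_ne_zero hnq (hb.ne_zero 0)
  have hpb1 : padr n q (b 1) ≠ 0 := padr_ne_zero hnq (hb.ne_zero 1)
  set W := φ M - pad p q M with hWdef
  have hcon : ∀ X : Matrix (Fin m) (Fin n) D, rowRank X = 1 →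
      rowRank (M - X) ≤ 1 → rowRank (W + pad p q X) = 1 := by
    intro X hX1 hXle
    have hadj : Adjacent M (M - X) := by
      unfold Adjacent
      rw [sub_sub_cancel]
      exact hX1
    have him := hφ _ _ hadj
    rw [Adjacent, stepD hm hn hmp hnq φ hφ hdeg h hXle, pad_sub] at him
    have halg : φ M - (pad p q M - pad p q X) = W + pad p q X := by
      rw [hWdef]; abel
    rwa [halg] at him
  have hconA : ∀ X : Matrix (Fin m) (Fin n) D, rowRank X = 1 →
      rowRank (rosum a b - X) ≤ 1 → rowRank (W + pad p q X) = 1 := by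
    intro X h1 h2
    exact hcon X h1 (by rwa [hM])
  -- swapped family
  set e : Fin 2 ≃ Fin 2 := Equiv.swap 0 1 with he
  have hconB : ∀ X : Matrix (Fin m) (Fin n) D, rowRank X = 1 →
      rowRank (rosum (a ∘ e) (b ∘ e) - X) ≤ 1 → rowRank (W + pad p q X) = 1 := by
    intro X h1 h2
    rw [rosum_reindex] at h2
    exact hconA X h1 h2
  have hae0 : (a ∘ e) 0 = a 1 := by simp [he]
  have hae1 : (a ∘ e) 1 = a 0 := by simp [he]
  have hbe0 : (b ∘ e) 0 = b 1 := by simp [he]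
  have hbe1 : (b ∘ e) 1 = b 0 := by simp [he]
  have hform0 := stepE_index hmp hnq ha hb hconA
  have hform1 := stepE_index hmp hnq (rindep_reindex e ha) (hb.comp e e.injective) hconB
  rw [hae0, hae1, hbe0, hbe1] at hform1
  have hpadM : pad p q M = ro (padc m p (a 0)) (padr n q (b 0)) +
      ro (padc m p (a 1)) (padr n q (b 1)) := by
    rw [hM, rosum_eq_two, pad_add, pad_ro, pad_ro]
  by_cases hWz : W = 0
  · left
    exact sub_eq_zero.mp (hWdef ▸ hWz)
  rcases hform0 with ⟨γ, hγ⟩ | ⟨γ, hγ0, hγ⟩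
  · rcases hform1 with ⟨δ, hδ⟩ | ⟨δ, hδ0, hδ⟩
    · exfalso
      have hne : ro (padc m p (a 0)) (γ • padr n q (b 0)) ≠ 0 := by
        rw [← hγ]; exact hWz
      exact hnrp (ro_eq_ro_rpar (by rw [← hγ, hδ]) hne)
    · exfalso
      have hE : ro (padc m p (a 1)) (padr n q (b 1)) =
          ro (padc m p (a 0)) ((δ - γ) • padr n q (b 0)) := by
        have h1 : ro (padc m p (a 1)) (padr n q (b 1)) =
            ro (padc m p (a 0)) (δ • padr n q (b 0)) - W := by
          rw [hδ]; abel
        rw [h1, hγ, sub_smul, ro_sub_right]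
      exact hnrp (rpar_symm (ro_eq_ro_rpar hE (ro_ne_zero hpa1 hpb1)))
  · rcases hform1 with ⟨δ, hδ⟩ | ⟨δ, hδ0, hδ⟩
    · exfalso
      have hE : ro (padc m p (a 0)) (padr n q (b 0)) =
          ro (padc m p (a 1)) ((γ - δ) • padr n q (b 1)) := by
        have h1 : ro (padc m p (a 0)) (padr n q (b 0)) =
            ro (padc m p (a 1)) (γ • padr n q (b 1)) - W := by
          rw [hγ]; abel
        rw [h1, hδ, sub_smul, ro_sub_right]
      exact hnrp (ro_eq_ro_rpar hE (ro_ne_zero hpa0 hpb0))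
    · have hE : ro (padc m p (a 1)) ((γ + 1) • padr n q (b 1)) =
          ro (padc m p (a 0)) ((δ + 1) • padr n q (b 0)) := by
        rw [add_smul, one_smul, ro_add_right, add_smul, one_smul, ro_add_right]
        have h1 : ro (padc m p (a 1)) (γ • padr n q (b 1)) =
            W + ro (padc m p (a 0)) (padr n q (b 0)) := by
          rw [hγ]; abel
        have h2 : ro (padc m p (a 0)) (δ • padr n q (b 0)) =
            W + ro (padc m p (a 1)) (padr n q (b 1)) := by
          rw [hδ]; abel
        rw [h1, h2]; abel
      by_cases hγ1 : γ + 1 = 0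
      · right
        have hγv : γ = -1 := by
          linear_combination (norm := noncomm_ring) hγ1
        have hφM : φ M = W + pad p q M := by
          rw [hWdef]; abel
        rw [hφM, hγ, hγv, hpadM, neg_smul, one_smul, ro_neg_right]
        abel
      · exfalso
        have hne : ro (padc m p (a 1)) ((γ + 1) • padr n q (b 1)) ≠ 0 :=
          ro_ne_zero hpa1 (smul_ne_zero hγ1 hpb1)
        exact hnrp (rpar_symm (ro_eq_ro_rpar hE hne))

lemma stepE2' (hm : 2 ≤ m) (hn : 2 ≤ n) (hmp : m ≤ p) (hnq : n ≤ q)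
    (φ : Matrix (Fin m) (Fin n) D → Matrix (Fin p) (Fin q) D)
    (hφ : ∀ A B, Adjacent A B → Adjacent (φ A) (φ B))
    (hdeg : ¬ DegZero φ)
    (h : ∀ M : Matrix (Fin m) (Fin n) D,
      M ∈ Rvec (eo n) ∪ Lvec (eo m) → φ M = pad p q M)
    {M : Matrix (Fin m) (Fin n) D} (hr : rowRank M = 2) : φ M = pad p q M := by
  rcases stepE2 hm hn hmp hnq φ hφ hdeg h hr with hok | hz
  · exact hok
  exfalso
  obtain ⟨a, b, hM, ha, hb⟩ := factorization' M hr
  have h01 : (0 : Fin 2) ≠ 1 := by decide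
  have hnl : ¬ LPar (b 0) (b 1) := not_lpar_of_lindep_family hb h01
  have hnl' : ¬ LPar (b 0 + b 1) (b 1) := by
    rintro (⟨c, hc⟩ | ⟨c, hc⟩)
    · apply hnl
      left
      exact ⟨c - 1, by rw [sub_smul, one_smul]; exact eq_sub_of_add_eq hc⟩
    · by_cases hc0 : c = 0
      · exact (hb.ne_zero 1) (by rw [hc, hc0, zero_smul])
      · apply hnl
        left
        refine ⟨c⁻¹ * (1 - c), ?_⟩
        have h1 : c • b 0 = (1 - c) • b 1 := by
          rw [smul_add] at hc
          rw [sub_smul, one_smul, eq_sub_iff_add_eq, ← hc]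
        have h2 : b 0 = c⁻¹ • (c • b 0) := by
          rw [smul_smul, inv_mul_cancel₀ hc0, one_smul]
        rw [h2, h1, smul_smul]
  have hb' : LinearIndependent D ![b 0 + b 1, b 1] := lindep_pair hnl'
  have hra : RIndep ![a 0, a 1] := rindep_pair_of_family ha h01
  have hM'eq : M + ro (a 0) (b 1) = rosum ![a 0, a 1] ![b 0 + b 1, b 1] := by
    rw [hM, rosum_eq_two, rosum_eq_two]
    simp only [Matrix.cons_val_zero, Matrix.cons_val_one, Matrix.head_cons]
    rw [ro_add_right]
    abel
  have hr' : rowRank (M + ro (a 0) (b 1)) = 2 := by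
    rw [hM'eq, rowRank_rosum hra, finrank_span_eq_card hb']
    simp
  have hadj : Adjacent (M + ro (a 0) (b 1)) M := by
    unfold Adjacent
    rw [add_sub_cancel_left]
    exact rowRank_ro (nonzero_of_rindep ha 0) (hb.ne_zero 1)
  have him := hφ _ _ hadj
  rw [Adjacent, hz, sub_zero] at him
  rcases stepE2 hm hn hmp hnq φ hφ hdeg h hr' with hok' | hz'
  · rw [hok'] at him
    have hrank2 : rowRank (pad p q (M + ro (a 0) (b 1))) = 2 := by
      rw [hM'eq, rosum_eq_two]
      simp only [Matrix.cons_val_zero, Matrix.cons_val_one, Matrix.head_cons]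
      rw [pad_add, pad_ro, pad_ro]
      apply rowRank_two
      · intro hc
        exact (not_rpar_of_rindep_family ha h01) (rpar_padc hmp hc)
      · intro hc
        have : LPar (padr n q (b 0 + b 1)) (padr n q (b 1)) := by
          rwa [padr_add] at hc ⊢
        exact hnl' (lpar_padr hnq this)
    rw [him] at hrank2
    omega
  · rw [hz', rowRank_zero] at him
    omega

lemma stepE3 (hm : 2 ≤ m) (hn : 2 ≤ n) (hmp : m ≤ p) (hnq : n ≤ q)
    (φ : Matrix (Fin m) (Fin n) D → Matrix (Fin p) (Fin q) D)
    (hφ : ∀ A B, Adjacent A B → Adjacent (φ A) (φ B))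
    {M : Matrix (Fin m) (Fin n) D} {r : ℕ} (hr : rowRank M = r) (h3 : 3 ≤ r)
    (IH : ∀ B : Matrix (Fin m) (Fin n) D, rowRank B < r → φ B = pad p q B) :
    φ M = pad p q M := by
  obtain ⟨a, b, hM, ha, hb⟩ := factorization' M hr
  set W := φ M - pad p q M with hWdef
  have hcon : ∀ X : Matrix (Fin m) (Fin n) D, rowRank X = 1 →
      rowRank (M - X) < r → rowRank (W + pad p q X) = 1 := by
    intro X hX1 hXlt
    have hadj : Adjacent M (M - X) := by
      unfold Adjacent
      rw [sub_sub_cancel]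
      exact hX1
    have him := hφ _ _ hadj
    rw [Adjacent, IH _ hXlt, pad_sub] at him
    have halg : φ M - (pad p q M - pad p q X) = W + pad p q X := by
      rw [hWdef]; abel
    rwa [halg] at him
  have hform : ∀ k l1 l2 : Fin r, l1 ≠ k → l2 ≠ k → l1 ≠ l2 →
      ∃ z, W = ro (padc m p (a k)) z := by
    intro k l1 l2 hl1 hl2 hl12
    have hak := nonzero_of_rindep ha k
    have hbk := hb.ne_zero k
    have hXk : rowRank (ro (a k) (b k)) = 1 := rowRank_ro hak hbk
    have hMXk : rowRank (M - ro (a k) (b k)) < r := by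
      have := rowRank_rosum_sub_ro ha hb k l1 hl1 0
      rwa [zero_smul, add_zero, ← hM] at this
    have hRk := hcon _ hXk hMXk
    rw [pad_ro] at hRk
    obtain ⟨α, β, hα, hβ, hRkeq⟩ := exists_ro_of_rowRank_eq_one hRk
    have hdisj : ∀ l : Fin r, l ≠ k →
        RPar α (padc m p (a k)) ∨ LPar β (padr n q (b l)) := by
      intro l hl
      have hbkl : b k + b l ≠ 0 := by
        intro hc
        have hcc : (1 : D) • b k + (1 : D) • b l = 0 := by
          rw [one_smul, one_smul]; exact hc
        have := (lindep_coords (lindep_pair_of_family hb (Ne.symm hl)) hcc).1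
        simp at this
      have hX : rowRank (ro (a k) (b k + b l)) = 1 := rowRank_ro hak hbkl
      have hMX : rowRank (M - ro (a k) (b k + b l)) < r := by
        have := rowRank_rosum_sub_ro ha hb k l hl 1
        rwa [one_smul, ← hM] at this
      have hc := hcon _ hX hMX
      rw [pad_ro, padr_add] at hc
      have halg : W + ro (padc m p (a k)) (padr n q (b k) + padr n q (b l)) =
          (W + ro (padc m p (a k)) (padr n q (b k))) +
            ro (padc m p (a k)) (padr n q (b l)) := by
        rw [ro_add_right]; abel
      rw [halg, hRkeq] at hc
      apply par_of_rank_ne_two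
      rw [hc]; omega
    have hR : RPar α (padc m p (a k)) := by
      rcases hdisj l1 hl1 with hP | hL1
      · exact hP
      rcases hdisj l2 hl2 with hP | hL2
      · exact hP
      exfalso
      have hnl : ¬ LPar (b l1) (b l2) := not_lpar_of_lindep_family hb hl12
      have hnlp : ¬ LPar (padr n q (b l1)) (padr n q (b l2)) :=
        fun hc => hnl (lpar_padr hnq hc)
      exact hnlp (lpar_trans hβ (lpar_symm hL1) hL2)
    obtain ⟨s, hs⟩ := rpar_iff (padc_ne_zero hmp hak) (rpar_symm hR)
    refine ⟨s • β - padr n q (b k), ?_⟩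
    have hW : W = ro α β - ro (padc m p (a k)) (padr n q (b k)) :=
      eq_sub_of_add_eq hRkeq
    rw [hW, hs, ro_rs, ro_sub_right]
  obtain ⟨z0, hz0⟩ := hform ⟨0, by omega⟩ ⟨1, by omega⟩ ⟨2, by omega⟩
    (Fin.ne_of_val_ne (by norm_num)) (Fin.ne_of_val_ne (by norm_num))
    (Fin.ne_of_val_ne (by norm_num))
  obtain ⟨z1, hz1⟩ := hform ⟨1, by omega⟩ ⟨0, by omega⟩ ⟨2, by omega⟩
    (Fin.ne_of_val_ne (by norm_num)) (Fin.ne_of_val_ne (by norm_num))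
    (Fin.ne_of_val_ne (by norm_num))
  by_cases hWz : W = 0
  · exact sub_eq_zero.mp (hWdef ▸ hWz)
  · exfalso
    have hnr : ¬ RPar (a ⟨0, by omega⟩) (a ⟨1, by omega⟩) :=
      not_rpar_of_rindep_family ha (Fin.ne_of_val_ne (by norm_num))
    have hnrp : ¬ RPar (padc m p (a ⟨0, by omega⟩)) (padc m p (a ⟨1, by omega⟩)) :=
      fun hc => hnr (rpar_padc hmp hc)
    exact hnrp (ro_eq_ro_rpar (by rw [← hz0, hz1]) (by rw [← hz0]; exact hWz))

end stepE

end S13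

/-- Lemma 3.16. -/
theorem stmt13 (hEAS : EAS D) (m n p q : ℕ) (hm : 2 ≤ m) (hn : 2 ≤ n) (hp : 2 ≤ p)
    (hq : 2 ≤ q) (hmp : m ≤ p) (hnq : n ≤ q)
    (φ : Matrix (Fin m) (Fin n) D → Matrix (Fin p) (Fin q) D)
    (hφ : ∀ A B, Adjacent A B → Adjacent (φ A) (φ B))
    (hdeg : ¬ DegZero φ)
    (h : ∀ M : Matrix (Fin m) (Fin n) D,
      M ∈ Rvec (fun j : Fin n => if (j : ℕ) = 0 then (1 : D) else 0) ∪
          Lvec (fun i : Fin m => if (i : ℕ) = 0 then (1 : D) else 0) →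
      φ M = pad p q M) :
    ∀ M : Matrix (Fin m) (Fin n) D, φ M = pad p q M := by
  have h' : ∀ M : Matrix (Fin m) (Fin n) D,
      M ∈ Rvec (S13.eo n) ∪ Lvec (S13.eo m) → φ M = pad p q M := h
  have main : ∀ r : ℕ, ∀ M : Matrix (Fin m) (Fin n) D,
      rowRank M = r → φ M = pad p q M := by
    intro r
    induction r using Nat.strong_induction_on with
    | _ r IH =>
      intro M hrM
      by_cases h2 : r ≤ 1
      · exact S13.stepD hm hn hmp hnq φ hφ hdeg h' (by rw [hrM]; exact h2)
      by_cases h22 : r = 2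
      · exact S13.stepE2' hm hn hmp hnq φ hφ hdeg h' (by rw [hrM, h22])
      · exact S13.stepE3 hm hn hmp hnq φ hφ hrM (by omega)
          (fun B hB => IH (rowRank B) hB B rfl)
  intro M
  exact main (rowRank M) M rfl
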